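/- arXiv:1503.03947 — 9 statements merged into one kernel-verified Lean document; each statement's English description precedes it below -/
import Mathlib

section
/- Two frames {φ_i}_{i=1}^N and {ψ_i}_{i=1}^N for a finite-dimensional Hilbert space H^M are woven (i.e., there are universal constants 0 < A ≤ B so that for every σ ⊆ [N], the family {φ_i}_{i∈σ} ∪ {ψ_i}_{i∈σ^c} is a frame with bounds A, B) if and only if for every σ ⊆ [N], the family {φ_i}_{i∈σ} ∪ {ψ_i}_{i∈σ^c} spans H^M. -/
open scoped RealInnerProductSpace BigOperators Classical

private lemma lower_bound_of_span {H : Type*} [NormedAddCommGroup H] [InnerProductSpace ℝ H]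
    [FiniteDimensional ℝ H] [Nontrivial H] {n : ℕ} (v : Fin n → H)
    (hspan : Submodule.span ℝ (Set.range v) = ⊤) :
    ∃ A : ℝ, 0 < A ∧ ∀ x : H, A * ‖x‖ ^ 2 ≤ ∑ i : Fin n, ⟪x, v i⟫ ^ 2 := by
  have hcont : Continuous fun x : H => ∑ i : Fin n, ⟪x, v i⟫ ^ 2 :=
    continuous_finset_sum _ fun i _ => (continuous_id.inner continuous_const).pow 2
  have hS : IsCompact (Metric.sphere (0:H) 1) := isCompact_sphere 0 1
  have hne : (Metric.sphere (0:H) 1).Nonempty := NormedSpace.sphere_nonempty.mpr zero_le_one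
  obtain ⟨u, huS, hu⟩ := hS.exists_isMinOn hne hcont.continuousOn
  have hun : ‖u‖ = 1 := by simpa using huS
  set A := ∑ i : Fin n, ⟪u, v i⟫ ^ 2 with hA
  have hA0 : 0 ≤ A := Finset.sum_nonneg fun i _ => sq_nonneg _
  have hApos : 0 < A := by
    rcases hA0.lt_or_eq with h | h
    · exact h
    · exfalso
      have hz : ∀ i : Fin n, ⟪u, v i⟫ = 0 := by
        intro i
        have := (Finset.sum_eq_zero_iff_of_nonneg (fun i _ => sq_nonneg (⟪u, v i⟫))).mp h.symm
          i (Finset.mem_univ i)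
        exact pow_eq_zero_iff (n := 2) (by norm_num) |>.mp this
      have hu0 : ⟪u, u⟫ = 0 := by
        have hmem : u ∈ Submodule.span ℝ (Set.range v) := by rw [hspan]; trivial
        refine Submodule.span_induction (p := fun w _ => ⟪u, w⟫ = 0) ?_ ?_ ?_ ?_ hmem
        · rintro w ⟨i, rfl⟩; exact hz i
        · simp
        · intro a b _ _ ha hb; rw [inner_add_right, ha, hb, add_zero]
        · intro c a _ ha; rw [real_inner_smul_right, ha, mul_zero]
      have : u = 0 := by
        have := inner_self_eq_zero (𝕜 := ℝ).mp hu0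
        exact this
      rw [this] at hun; simp at hun
  refine ⟨A, hApos, fun x => ?_⟩
  rcases eq_or_ne x 0 with rfl | hx
  · simp
  · have hc : (0:ℝ) < ‖x‖ := norm_pos_iff.mpr hx
    set w := ‖x‖⁻¹ • x with hw
    have hwS : w ∈ Metric.sphere (0:H) 1 := by
      simp [hw, norm_smul, abs_of_nonneg (inv_nonneg.mpr hc.le), inv_mul_cancel₀ hc.ne']
    have hAw : A ≤ ∑ i : Fin n, ⟪w, v i⟫ ^ 2 := hu hwS
    have hsum : ∑ i : Fin n, ⟪w, v i⟫ ^ 2 = ‖x‖⁻¹ ^ 2 * ∑ i : Fin n, ⟪x, v i⟫ ^ 2 := by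
      rw [Finset.mul_sum]
      refine Finset.sum_congr rfl fun i _ => ?_
      rw [hw, real_inner_smul_left]; ring
    rw [hsum] at hAw
    have h2 : ‖x‖⁻¹ ^ 2 = (‖x‖ ^ 2)⁻¹ := by rw [inv_pow]
    rw [h2] at hAw
    calc A * ‖x‖ ^ 2 ≤ (‖x‖ ^ 2)⁻¹ * (∑ i : Fin n, ⟪x, v i⟫ ^ 2) * ‖x‖ ^ 2 := by
          exact mul_le_mul_of_nonneg_right hAw (by positivity)
      _ = ∑ i : Fin n, ⟪x, v i⟫ ^ 2 := by field_simp

/-- Two frames for a finite-dimensional Hilbert space are woven if and only if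
every weaving spans the space. -/
theorem stmt_1 {H : Type*} [NormedAddCommGroup H] [InnerProductSpace ℝ H]
    [FiniteDimensional ℝ H] {M N : ℕ} (hM : Module.finrank ℝ H = M)
    (φ ψ : Fin N → H)
    (hφ : ∃ A B : ℝ, 0 < A ∧ A ≤ B ∧ ∀ x : H,
      A * ‖x‖ ^ 2 ≤ (∑ i : Fin N, ⟪x, φ i⟫ ^ 2) ∧ (∑ i : Fin N, ⟪x, φ i⟫ ^ 2) ≤ B * ‖x‖ ^ 2)
    (hψ : ∃ A B : ℝ, 0 < A ∧ A ≤ B ∧ ∀ x : H,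
      A * ‖x‖ ^ 2 ≤ (∑ i : Fin N, ⟪x, ψ i⟫ ^ 2) ∧ (∑ i : Fin N, ⟪x, ψ i⟫ ^ 2) ≤ B * ‖x‖ ^ 2) :
    (∃ A B : ℝ, 0 < A ∧ A ≤ B ∧ ∀ σ : Set (Fin N), ∀ x : H,
        A * ‖x‖ ^ 2 ≤ (∑ i : Fin N, ⟪x, if i ∈ σ then φ i else ψ i⟫ ^ 2) ∧
        (∑ i : Fin N, ⟪x, if i ∈ σ then φ i else ψ i⟫ ^ 2) ≤ B * ‖x‖ ^ 2) ↔
      (∀ σ : Set (Fin N),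
        Submodule.span ℝ (Set.range fun i : Fin N => if i ∈ σ then φ i else ψ i) = ⊤) := by
  constructor
  · rintro ⟨A, B, hA, hAB, h⟩ σ
    rw [← Submodule.orthogonal_eq_bot_iff]
    rw [Submodule.eq_bot_iff]
    intro x hx
    have hz : ∀ i : Fin N, ⟪x, if i ∈ σ then φ i else ψ i⟫ = 0 := by
      intro i
      have hmem : (if i ∈ σ then φ i else ψ i) ∈
          Submodule.span ℝ (Set.range fun i : Fin N => if i ∈ σ then φ i else ψ i) :=
        Submodule.subset_span ⟨i, rfl⟩
      have := hx _ hmem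
      rw [real_inner_comm] at this
      exact this
    have hsum : (∑ i : Fin N, ⟪x, if i ∈ σ then φ i else ψ i⟫ ^ 2) = 0 := by
      refine Finset.sum_eq_zero fun i _ => ?_
      rw [hz i]; ring
    have hle := (h σ x).1
    rw [hsum] at hle
    have hx2 : ‖x‖ ^ 2 = 0 := by
      by_contra hc
      have : 0 < ‖x‖ ^ 2 := lt_of_le_of_ne (sq_nonneg _) (Ne.symm hc)
      nlinarith
    have : ‖x‖ = 0 := by
      have := pow_eq_zero_iff (n := 2) (by norm_num) |>.mp hx2
      exact this
    exact norm_eq_zero.mp this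
  · intro hspan
    obtain ⟨Aφ, Bφ, hAφ, hABφ, hφ'⟩ := hφ
    obtain ⟨Aψ, Bψ, hAψ, hABψ, hψ'⟩ := hψ
    set B := Bφ + Bψ with hB
    have hBpos : 0 < B := by rw [hB]; linarith
    have hupper : ∀ (σ : Set (Fin N)) (x : H),
        (∑ i : Fin N, ⟪x, if i ∈ σ then φ i else ψ i⟫ ^ 2) ≤ B * ‖x‖ ^ 2 := by
      intro σ x
      calc (∑ i : Fin N, ⟪x, if i ∈ σ then φ i else ψ i⟫ ^ 2)
          ≤ ∑ i : Fin N, (⟪x, φ i⟫ ^ 2 + ⟪x, ψ i⟫ ^ 2) := by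
            refine Finset.sum_le_sum fun i _ => ?_
            split <;> nlinarith [sq_nonneg (⟪x, φ i⟫ : ℝ), sq_nonneg (⟪x, ψ i⟫ : ℝ)]
        _ = (∑ i : Fin N, ⟪x, φ i⟫ ^ 2) + ∑ i : Fin N, ⟪x, ψ i⟫ ^ 2 :=
            Finset.sum_add_distrib
        _ ≤ Bφ * ‖x‖ ^ 2 + Bψ * ‖x‖ ^ 2 := add_le_add (hφ' x).2 (hψ' x).2
        _ = B * ‖x‖ ^ 2 := by rw [hB]; ring
    rcases subsingleton_or_nontrivial H with hsub | hnt
    · refine ⟨B, B, hBpos, le_refl _, fun σ x => ?_⟩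
      have hx0 : x = 0 := Subsingleton.elim x 0
      subst hx0
      simp
    · choose A0 hpos hbd using fun σ : Set (Fin N) => lower_bound_of_span _ (hspan σ)
      have hone : (Finset.univ : Finset (Set (Fin N))).Nonempty := Finset.univ_nonempty
      set Am := (Finset.univ : Finset (Set (Fin N))).inf' hone A0 with hAm
      have hAmpos : 0 < Am := by
        rw [hAm, Finset.lt_inf'_iff]
        exact fun σ _ => hpos σ
      refine ⟨min Am B, B, lt_min hAmpos hBpos, min_le_right _ _, fun σ x => ⟨?_, hupper σ x⟩⟩
      calc min Am B * ‖x‖ ^ 2 ≤ A0 σ * ‖x‖ ^ 2 := by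
            refine mul_le_mul_of_nonneg_right ?_ (by positivity)
            exact le_trans (min_le_left _ _) (Finset.inf'_le _ (Finset.mem_univ σ))
        _ ≤ _ := hbd σ x
end

section
/- Let Φ and Ψ be frames for a Hilbert space H with optimal upper frame bounds B₁ and B₂ respectively. If Φ and Ψ are woven, then the optimal universal upper weaving bound is strictly less than B₁ + B₂. -/
open scoped RealInnerProductSpace BigOperators Classical

/-- If `Φ` and `Ψ` are woven frames with optimal upper frame bounds `B₁` and `B₂`,
then the optimal universal upper weaving bound is strictly less than `B₁ + B₂`. -/
theorem stmt_6 {H : Type*} [NormedAddCommGroup H] [InnerProductSpace ℝ H]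
    {I : Type*} (φ ψ : I → H) (B₁ B₂ : ℝ)
    (hφ : ∃ A : ℝ, 0 < A ∧ A ≤ B₁ ∧ ∀ x : H,
      A * ‖x‖ ^ 2 ≤ (∑' i : I, ⟪x, φ i⟫ ^ 2) ∧ (∑' i : I, ⟪x, φ i⟫ ^ 2) ≤ B₁ * ‖x‖ ^ 2)
    (hψ : ∃ A : ℝ, 0 < A ∧ A ≤ B₂ ∧ ∀ x : H,
      A * ‖x‖ ^ 2 ≤ (∑' i : I, ⟪x, ψ i⟫ ^ 2) ∧ (∑' i : I, ⟪x, ψ i⟫ ^ 2) ≤ B₂ * ‖x‖ ^ 2)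
    (hB₁ : B₁ = sSup {r : ℝ | ∃ x : H, ‖x‖ = 1 ∧ r = ∑' i : I, ⟪x, φ i⟫ ^ 2})
    (hB₂ : B₂ = sSup {r : ℝ | ∃ x : H, ‖x‖ = 1 ∧ r = ∑' i : I, ⟪x, ψ i⟫ ^ 2})
    (hwoven : ∃ A B : ℝ, 0 < A ∧ A ≤ B ∧ ∀ σ : Set I, ∀ x : H,
      A * ‖x‖ ^ 2 ≤ (∑' i : I, ⟪x, if i ∈ σ then φ i else ψ i⟫ ^ 2) ∧
      (∑' i : I, ⟪x, if i ∈ σ then φ i else ψ i⟫ ^ 2) ≤ B * ‖x‖ ^ 2) :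
    sSup {r : ℝ | ∃ (σ : Set I) (x : H), ‖x‖ = 1 ∧
        r = ∑' i : I, ⟪x, if i ∈ σ then φ i else ψ i⟫ ^ 2} < B₁ + B₂ := by
  obtain ⟨A₁, hA₁, hA₁B, h₁⟩ := hφ
  obtain ⟨A₂, hA₂, hA₂B, h₂⟩ := hψ
  obtain ⟨A, B, hA, hAB, hw⟩ := hwoven
  set S := {r : ℝ | ∃ (σ : Set I) (x : H), ‖x‖ = 1 ∧
        r = ∑' i : I, ⟪x, if i ∈ σ then φ i else ψ i⟫ ^ 2} with hSdef
  by_cases hS : S.Nonempty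
  · have key : ∀ r ∈ S, r ≤ B₁ + B₂ - A := by
      rintro r ⟨σ, x, hx, rfl⟩
      have hx2 : ‖x‖ ^ 2 = 1 := by rw [hx]; norm_num
      set f := fun i => ⟪x, φ i⟫ ^ 2 with hfdef
      set g := fun i => ⟪x, ψ i⟫ ^ 2 with hgdef
      have hf : Summable f := by
        by_contra hc
        have := (h₁ x).1
        rw [tsum_eq_zero_of_not_summable hc, hx2, mul_one] at this
        linarith
      have hg : Summable g := by
        by_contra hc
        have := (h₂ x).1
        rw [tsum_eq_zero_of_not_summable hc, hx2, mul_one] at this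
        linarith
      set w := fun i => ⟪x, if i ∈ σ then φ i else ψ i⟫ ^ 2 with hwdef
      set w' := fun i => ⟪x, if i ∈ σᶜ then φ i else ψ i⟫ ^ 2 with hw'def
      have hle : ∀ i, w i ≤ f i + g i := by
        intro i
        by_cases hi : i ∈ σ <;>
          simp only [hwdef, hfdef, hgdef, hi, if_true, if_false] <;>
          nlinarith [sq_nonneg ⟪x, φ i⟫, sq_nonneg ⟪x, ψ i⟫]
      have hle' : ∀ i, w' i ≤ f i + g i := by
        intro i
        by_cases hi : i ∈ σᶜ <;>
          simp only [hw'def, hfdef, hgdef, hi, if_true, if_false] <;>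
          nlinarith [sq_nonneg ⟪x, φ i⟫, sq_nonneg ⟪x, ψ i⟫]
      have hws : Summable w :=
        Summable.of_nonneg_of_le (fun i => sq_nonneg _) hle (hf.add hg)
      have hw's : Summable w' :=
        Summable.of_nonneg_of_le (fun i => sq_nonneg _) hle' (hf.add hg)
      have hadd : (∑' i, w i) + (∑' i, w' i) = (∑' i, f i) + (∑' i, g i) := by
        rw [← Summable.tsum_add hws hw's, ← Summable.tsum_add hf hg]
        congr 1
        funext i
        by_cases hi : i ∈ σ <;>
          simp [hwdef, hw'def, hfdef, hgdef, hi, add_comm]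
      have h3 := (hw σᶜ x).1
      rw [hx2, mul_one] at h3
      have h4 := (h₁ x).2
      have h5 := (h₂ x).2
      rw [hx2, mul_one] at h4 h5
      have h3' : A ≤ ∑' i, w' i := by
        refine le_of_le_of_eq h3 (tsum_congr fun i => ?_)
        by_cases hi : i ∈ σ <;> simp [hw'def, hi]
      have h4' : (∑' i, f i) ≤ B₁ := by simpa only [hfdef] using h4
      have h5' : (∑' i, g i) ≤ B₂ := by simpa only [hgdef] using h5
      show (∑' i, w i) ≤ B₁ + B₂ - A
      linarith
    have hsup := csSup_le hS key
    linarith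
  · rw [Set.not_nonempty_iff_eq_empty] at hS
    rw [hS, Real.sSup_empty]
    linarith
end

section
/- Suppose {φ_i}_{i=1}^∞ and {ψ_i}_{i=1}^∞ are Riesz bases for a Hilbert space H and there are uniform constants 0 < A ≤ B such that for every σ ⊆ ℕ, the family {φ_i}_{i∈σ} ∪ {ψ_i}_{i∈σ^c} is a Riesz sequence with Riesz bounds A and B. Then for every finite σ ⊆ ℕ, the family {φ_i}_{i∈σ} ∪ {ψ_i}_{i∈σ^c} is a Riesz basis for H (i.e., its closed span is all of H). -/
open scoped RealInnerProductSpace BigOperators Classical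

lemma riesz_not_mem_closure {H : Type*} [NormedAddCommGroup H] [InnerProductSpace ℝ H]
    {v : ℕ → H} {A : ℝ} (hA : 0 < A)
    (hlow : ∀ c : ℕ →₀ ℝ, A * (∑ i ∈ c.support, (c i) ^ 2) ≤ ‖∑ i ∈ c.support, c i • v i‖ ^ 2)
    (j : ℕ) :
    v j ∉ (Submodule.span ℝ (v '' {i | i ≠ j})).topologicalClosure := by
  intro hmem
  have hmem' : v j ∈ closure ((Submodule.span ℝ (v '' {i | i ≠ j}) : Set H)) := by
    rw [← Submodule.topologicalClosure_coe]; exact hmem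
  rw [Metric.mem_closure_iff] at hmem'
  obtain ⟨y, hy, hdist⟩ := hmem' (Real.sqrt A) (Real.sqrt_pos.mpr hA)
  obtain ⟨l, hl, rfl⟩ := (Finsupp.mem_span_image_iff_linearCombination ℝ).mp hy
  have hlj : l j = 0 := by
    by_contra h
    exact ((Finsupp.mem_supported ℝ l).mp hl (Finsupp.mem_support_iff.mpr h)) rfl
  set c : ℕ →₀ ℝ := Finsupp.single j 1 - l with hc
  have hcj : c j = 1 := by simp [hc, hlj]
  have hsum : ∑ i ∈ c.support, c i • v i = v j - Finsupp.linearCombination ℝ v l := by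
    have : ∑ i ∈ c.support, c i • v i = Finsupp.linearCombination ℝ v c := by
      rw [Finsupp.linearCombination_apply, Finsupp.sum]
    rw [this, hc, map_sub, Finsupp.linearCombination_single, one_smul]
  have hone : (1:ℝ) ≤ ∑ i ∈ c.support, (c i) ^ 2 := by
    have hjmem : j ∈ c.support := Finsupp.mem_support_iff.mpr (by rw [hcj]; norm_num)
    calc (1:ℝ) = (c j)^2 := by rw [hcj]; norm_num
      _ ≤ ∑ i ∈ c.support, (c i) ^ 2 :=
        Finset.single_le_sum (fun i _ => sq_nonneg (c i)) hjmem
  have h1 := hlow c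
  rw [hsum] at h1
  have h2 : ‖v j - Finsupp.linearCombination ℝ v l‖ ^ 2 < A := by
    have hd : ‖v j - Finsupp.linearCombination ℝ v l‖ < Real.sqrt A := by
      rwa [← dist_eq_norm]
    have := pow_lt_pow_left₀ hd (norm_nonneg _) (two_ne_zero)
    rwa [Real.sq_sqrt hA.le] at this
  nlinarith

/-- If `φ` and `ψ` are Riesz bases and every weaving is a Riesz sequence with
uniform bounds `A, B`, then for every finite `σ` the weaving is a Riesz basis,
i.e. its closed span is all of `H`. -/
theorem stmt_7 {H : Type*} [NormedAddCommGroup H] [InnerProductSpace ℝ H]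
    (φ ψ : ℕ → H) (A B : ℝ) (hA : 0 < A) (hAB : A ≤ B)
    (hφRiesz : ∃ A' B' : ℝ, 0 < A' ∧ A' ≤ B' ∧ ∀ c : ℕ →₀ ℝ,
      A' * (∑ i ∈ c.support, (c i) ^ 2) ≤ ‖∑ i ∈ c.support, c i • φ i‖ ^ 2 ∧
      ‖∑ i ∈ c.support, c i • φ i‖ ^ 2 ≤ B' * (∑ i ∈ c.support, (c i) ^ 2))
    (hφdense : Dense (Submodule.span ℝ (Set.range φ) : Set H))
    (hψRiesz : ∃ A' B' : ℝ, 0 < A' ∧ A' ≤ B' ∧ ∀ c : ℕ →₀ ℝ,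
      A' * (∑ i ∈ c.support, (c i) ^ 2) ≤ ‖∑ i ∈ c.support, c i • ψ i‖ ^ 2 ∧
      ‖∑ i ∈ c.support, c i • ψ i‖ ^ 2 ≤ B' * (∑ i ∈ c.support, (c i) ^ 2))
    (hψdense : Dense (Submodule.span ℝ (Set.range ψ) : Set H))
    (hweave : ∀ σ : Set ℕ, ∀ c : ℕ →₀ ℝ,
      A * (∑ i ∈ c.support, (c i) ^ 2) ≤
        ‖∑ i ∈ c.support, c i • (if i ∈ σ then φ i else ψ i)‖ ^ 2 ∧
      ‖∑ i ∈ c.support, c i • (if i ∈ σ then φ i else ψ i)‖ ^ 2 ≤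
        B * (∑ i ∈ c.support, (c i) ^ 2)) :
    ∀ σ : Set ℕ, σ.Finite →
      Dense (Submodule.span ℝ
        (Set.range fun i : ℕ => if i ∈ σ then φ i else ψ i) : Set H) := by
  intro σ hσ
  set w : Set ℕ → ℕ → H := fun τ i => if i ∈ τ then φ i else ψ i with hw
  refine Set.Finite.induction_on (motive := fun σ _ =>
      Dense (Submodule.span ℝ (Set.range fun i : ℕ => if i ∈ σ then φ i else ψ i) : Set H))
      σ hσ ?_ ?_
  · have : w ∅ = ψ := by funext i; simp [hw]
    simpa [this] using hψdense
  clear hσ σ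
  intro j σ hj hσfin IH
  show Dense (Submodule.span ℝ (Set.range (w (insert j σ))) : Set H)
  have IH : Dense (Submodule.span ℝ (Set.range (w σ)) : Set H) := IH
  -- the two weavings agree off `j`
  have hagree : ∀ i ∈ {i : ℕ | i ≠ j}, w (insert j σ) i = w σ i := by
    intro i hi
    have hmem : (i ∈ insert j σ) = (i ∈ σ) := by
      simp only [Set.mem_insert_iff]
      exact propext (or_iff_right hi)
    simp only [hw, hmem]
  have himg : w (insert j σ) '' {i | i ≠ j} = w σ '' {i | i ≠ j} :=
    Set.image_congr hagree
  set M : Submodule ℝ H :=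
    (Submodule.span ℝ (w (insert j σ) '' {i | i ≠ j})).topologicalClosure with hM
  have hMclosed : IsClosed (M : Set H) := Submodule.isClosed_topologicalClosure _
  -- ψ-side generator not in M
  have hψnot : w σ j ∉ M := by
    have := riesz_not_mem_closure (v := w σ) hA (fun c => (hweave σ c).1) j
    rw [hM, himg]; exact this
  have hφnot : w (insert j σ) j ∉ M :=
    riesz_not_mem_closure (v := w (insert j σ)) hA (fun c => (hweave (insert j σ) c).1) j
  -- pass to the quotient
  haveI : IsClosed ((M : Submodule ℝ H) : Set H) := hMclosed
  set Q := H ⧸ M with hQ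
  have hker : ∀ x : H, x ∈ M → M.mkQ x = 0 := by
    intro x hx; rwa [Submodule.mkQ_apply, Submodule.Quotient.mk_eq_zero]
  -- span of range (w σ) maps into span of the single vector mkQ (w σ j)
  have hmaple : Submodule.map M.mkQ (Submodule.span ℝ (Set.range (w σ)))
      ≤ Submodule.span ℝ {M.mkQ (w σ j)} := by
    rw [Submodule.map_span]
    apply Submodule.span_le.mpr
    rintro _ ⟨_, ⟨i, rfl⟩, rfl⟩
    by_cases hi : i = j
    · subst hi; exact Submodule.mem_span_singleton_self _
    · have hx : w σ i ∈ M := by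
        apply Submodule.le_topologicalClosure
        rw [himg]
        exact Submodule.subset_span ⟨i, hi, rfl⟩
      rw [hker _ hx]
      exact Submodule.zero_mem _
  -- the image of a dense set is dense in the quotient
  have hmkQcont : Continuous M.mkQ := continuous_quot_mk
  have hmkQsurj : Function.Surjective M.mkQ := Submodule.mkQ_surjective M
  have hdenseQ : Dense ((Submodule.span ℝ {M.mkQ (w σ j)} : Submodule ℝ Q) : Set Q) := by
    have h1 : Dense (M.mkQ '' (Submodule.span ℝ (Set.range (w σ)) : Set H)) := by
      have : DenseRange M.mkQ := hmkQsurj.denseRange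
      exact this.dense_image hmkQcont IH
    exact h1.mono (by
      rintro _ ⟨x, hx, rfl⟩
      exact hmaple ⟨x, hx, rfl⟩)
  -- finite-dimensional subspaces of the quotient are closed, so it is everything
  have hspan_top : (Submodule.span ℝ {M.mkQ (w σ j)} : Submodule ℝ Q) = ⊤ := by
    have hcl : IsClosed ((Submodule.span ℝ {M.mkQ (w σ j)} : Submodule ℝ Q) : Set Q) :=
      Submodule.closed_of_finiteDimensional _
    rw [Submodule.eq_top_iff']
    intro x
    have : x ∈ closure ((Submodule.span ℝ {M.mkQ (w σ j)} : Submodule ℝ Q) : Set Q) :=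
      hdenseQ x
    rwa [hcl.closure_eq] at this
  -- mkQ (w (insert j σ) j) is nonzero and spans the quotient
  have hune : M.mkQ (w (insert j σ) j) ≠ 0 := by
    rw [Submodule.mkQ_apply, Ne, Submodule.Quotient.mk_eq_zero]
    exact hφnot
  have hspan_u : (Submodule.span ℝ {M.mkQ (w (insert j σ) j)} : Submodule ℝ Q) = ⊤ := by
    have hu_mem : M.mkQ (w (insert j σ) j) ∈
        (Submodule.span ℝ {M.mkQ (w σ j)} : Submodule ℝ Q) := by
      rw [hspan_top]; trivial
    obtain ⟨a, ha⟩ := Submodule.mem_span_singleton.mp hu_mem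
    have ha0 : a ≠ 0 := by
      rintro rfl; rw [zero_smul] at ha; exact hune ha.symm
    have hv_mem : M.mkQ (w σ j) ∈
        (Submodule.span ℝ {M.mkQ (w (insert j σ) j)} : Submodule ℝ Q) := by
      rw [Submodule.mem_span_singleton]
      exact ⟨a⁻¹, by rw [← ha, smul_smul, inv_mul_cancel₀ ha0, one_smul]⟩
    rw [eq_top_iff, ← hspan_top]
    exact Submodule.span_le.mpr (by simpa using hv_mem)
  -- conclude density of the new weaving
  rw [Submodule.dense_iff_topologicalClosure_eq_top, Submodule.eq_top_iff']
  intro x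
  have hx : M.mkQ x ∈ (Submodule.span ℝ {M.mkQ (w (insert j σ) j)} : Submodule ℝ Q) := by
    rw [hspan_u]; trivial
  obtain ⟨b, hb⟩ := Submodule.mem_span_singleton.mp hx
  have hxb : x - b • w (insert j σ) j ∈ M := by
    rw [← Submodule.Quotient.mk_eq_zero, ← Submodule.mkQ_apply, map_sub, map_smul, hb,
      sub_self]
  set T : Submodule ℝ H := Submodule.span ℝ (Set.range (w (insert j σ))) with hT
  have hMT : M ≤ T.topologicalClosure := by
    apply Submodule.topologicalClosure_mono
    apply Submodule.span_mono
    rintro _ ⟨i, _, rfl⟩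
    exact ⟨i, rfl⟩
  have h1 : x - b • w (insert j σ) j ∈ T.topologicalClosure := hMT hxb
  have h2 : b • w (insert j σ) j ∈ T.topologicalClosure :=
    T.le_topologicalClosure (Submodule.smul_mem _ _ (Submodule.subset_span ⟨j, rfl⟩))
  have := Submodule.add_mem _ h1 h2
  rwa [sub_add_cancel] at this
end

section
/- Suppose {φ_i}_{i=1}^∞ and {ψ_i}_{i=1}^∞ are Riesz bases for a Hilbert space H such that there exist uniform constants 0 < A ≤ B with the property that for every σ ⊆ ℕ, the family {φ_i}_{i∈σ} ∪ {ψ_i}_{i∈σ^c} is a Riesz sequence with Riesz bounds A and B. Then for every σ ⊆ ℕ (possibly infinite), the family {φ_i}_{i∈σ} ∪ {ψ_i}_{i∈σ^c} is a Riesz basis for H. -/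
open scoped RealInnerProductSpace BigOperators Classical

section Aux

variable {H : Type*} [NormedAddCommGroup H] [InnerProductSpace ℝ H]

private lemma mem_orthogonal_span' {s : Set H} {y : H} (h : ∀ v ∈ s, ⟪v, y⟫ = 0) :
    y ∈ (Submodule.span ℝ s)ᗮ := by
  rw [Submodule.mem_orthogonal]
  intro u hu
  induction hu using Submodule.span_induction with
  | mem v hv => exact h v hv
  | zero => simp
  | add u v _ _ hu hv => rw [inner_add_left, hu, hv, add_zero]
  | smul a u _ hu => rw [real_inner_smul_left, hu, mul_zero]

private lemma not_mem_closure_span (g : ℕ → H) (A : ℝ) (hA : 0 < A)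
    (hg : ∀ c : ℕ →₀ ℝ, A * (∑ i ∈ c.support, (c i) ^ 2) ≤ ‖∑ i ∈ c.support, c i • g i‖ ^ 2)
    (j : ℕ) :
    g j ∉ closure (Submodule.span ℝ (g '' {j}ᶜ) : Set H) := by
  intro hmem
  rw [Metric.mem_closure_iff] at hmem
  obtain ⟨u, hu, hdist⟩ := hmem (Real.sqrt A) (Real.sqrt_pos.mpr hA)
  obtain ⟨l, hl, hlu⟩ := (Finsupp.mem_span_image_iff_linearCombination ℝ).mp hu
  have hlj : l j = 0 := by
    rw [Finsupp.mem_supported'] at hl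
    exact hl j (by simp)
  set c : ℕ →₀ ℝ := Finsupp.single j 1 - l with hc
  have hcj : c j = 1 := by simp [hc, hlj]
  have hsum : ∑ i ∈ c.support, c i • g i = g j - u := by
    show c.sum (fun i a => a • g i) = g j - u
    rw [hc, Finsupp.sum_sub_index (fun i b₁ b₂ => sub_smul b₁ b₂ (g i))]
    rw [Finsupp.sum_single_index (by simp), one_smul]
    rw [← hlu, Finsupp.linearCombination_apply]
  have h1 : (1:ℝ) ≤ ∑ i ∈ c.support, (c i)^2 := by
    have hj : j ∈ c.support := by
      rw [Finsupp.mem_support_iff, hcj]; norm_num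
    calc (1:ℝ) = (c j)^2 := by rw [hcj]; norm_num
    _ ≤ ∑ i ∈ c.support, (c i)^2 :=
      Finset.single_le_sum (fun i _ => sq_nonneg (c i)) hj
  have h2 := hg c
  rw [hsum] at h2
  rw [dist_eq_norm] at hdist
  have h4 : ‖g j - u‖^2 < A := by
    have hs := Real.sq_sqrt hA.le
    nlinarith [norm_nonneg (g j - u), Real.sqrt_nonneg A]
  nlinarith

private lemma swap_dense [CompleteSpace H] (F G : ℕ → H) (j : ℕ)
    (hFG : ∀ i, i ≠ j → F i = G i)
    (hFdense : Dense (Submodule.span ℝ (Set.range F) : Set H))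
    (A : ℝ) (hA : 0 < A)
    (hG : ∀ c : ℕ →₀ ℝ,
      A * (∑ i ∈ c.support, (c i) ^ 2) ≤ ‖∑ i ∈ c.support, c i • G i‖ ^ 2) :
    Dense (Submodule.span ℝ (Set.range G) : Set H) := by
  rw [Submodule.dense_iff_topologicalClosure_eq_top, Submodule.topologicalClosure_eq_top_iff,
    Submodule.eq_bot_iff]
  intro x hx
  by_contra hx0
  set M := Submodule.span ℝ (G '' {j}ᶜ) with hM
  have hMle : M ≤ Submodule.span ℝ (Set.range G) :=
    Submodule.span_mono (Set.image_subset_range _ _)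
  have hxM : x ∈ Mᗮ := Submodule.orthogonal_le hMle hx
  have key : ∀ y, y ∈ Mᗮ → ⟪F j, y⟫ = 0 → y = 0 := by
    intro y hy hyj
    have hy' : y ∈ (Submodule.span ℝ (Set.range F))ᗮ := by
      apply mem_orthogonal_span'
      rintro v ⟨i, rfl⟩
      rcases eq_or_ne i j with rfl | hij
      · exact hyj
      · rw [hFG i hij]
        exact Submodule.inner_right_of_mem_orthogonal
          (Submodule.subset_span
            (Set.mem_image_of_mem G (show i ∈ ({j}ᶜ : Set ℕ) by simp [hij]))) hy
    have hbot : (Submodule.span ℝ (Set.range F))ᗮ = ⊥ := by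
      rw [← Submodule.topologicalClosure_eq_top_iff,
        ← Submodule.dense_iff_topologicalClosure_eq_top]
      exact hFdense
    exact (Submodule.eq_bot_iff _).mp hbot y hy'
  have hFjx : ⟪F j, x⟫ ≠ 0 := fun h => hx0 (key x hxM h)
  set N := M.topologicalClosure with hN
  haveI : CompleteSpace N := M.isClosed_topologicalClosure.completeSpace_coe
  obtain ⟨m, hm, w, hw, hGj⟩ := N.exists_add_mem_mem_orthogonal (G j)
  have hNM : Nᗮ ≤ Mᗮ := Submodule.orthogonal_le M.le_topologicalClosure
  have hMN : ∀ y ∈ Mᗮ, ∀ v ∈ N, ⟪v, y⟫ = 0 := by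
    intro y hy v hv
    have hvset : v ∈ closure (M : Set H) := by
      rw [← Submodule.topologicalClosure_coe]; exact hv
    have hcl : closure (M : Set H) ⊆ {u | ⟪u, y⟫ = 0} := by
      apply closure_minimal
      · intro u hu
        exact Submodule.inner_right_of_mem_orthogonal hu hy
      · exact isClosed_eq (continuous_id.inner continuous_const) continuous_const
    exact hcl hvset
  have hwM : w ∈ Mᗮ := hNM hw
  have hw0 : w ≠ 0 := by
    intro h
    apply not_mem_closure_span G A hA hG j
    rw [h, add_zero] at hGj
    rw [hGj]
    have : (N : Set H) = closure (Submodule.span ℝ (G '' {j}ᶜ) : Set H) := by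
      rw [hN, Submodule.topologicalClosure_coe]
    rw [← this]
    exact hm
  have hFjw : ⟪F j, w⟫ ≠ 0 := fun h => hw0 (key w hwM h)
  have hu0 : ⟪F j, x⟫ • w - ⟪F j, w⟫ • x = 0 := by
    apply key
    · exact Submodule.sub_mem _ (Submodule.smul_mem _ _ hwM) (Submodule.smul_mem _ _ hxM)
    · rw [inner_sub_right, real_inner_smul_right, real_inner_smul_right]; ring
  have hxGj : ⟪x, G j⟫ = 0 := by
    rw [real_inner_comm]
    exact Submodule.inner_right_of_mem_orthogonal (Submodule.subset_span (Set.mem_range_self j)) hx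
  have hxm : ⟪x, m⟫ = 0 := by rw [real_inner_comm]; exact hMN x hxM m hm
  have hxw : ⟪x, w⟫ = 0 := by
    rw [hGj, inner_add_right, hxm] at hxGj
    linarith
  have hxx : ⟪F j, w⟫ * ⟪x, x⟫ = 0 := by
    have h := congrArg (fun v => ⟪x, v⟫) hu0
    simp only [inner_sub_right, real_inner_smul_right, inner_zero_right, hxw, mul_zero] at h
    linarith
  have : ⟪x, x⟫ = (0:ℝ) := by
    rcases mul_eq_zero.mp hxx with h | h
    · exact absurd h hFjw
    · exact h
  exact hx0 (inner_self_eq_zero.mp this)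

private lemma finite_weave_dense [CompleteSpace H] (φ ψ : ℕ → H) (A : ℝ) (hA : 0 < A)
    (hψdense : Dense (Submodule.span ℝ (Set.range ψ) : Set H))
    (hlow : ∀ σ : Set ℕ, ∀ c : ℕ →₀ ℝ,
      A * (∑ i ∈ c.support, (c i) ^ 2) ≤
        ‖∑ i ∈ c.support, c i • (if i ∈ σ then φ i else ψ i)‖ ^ 2) :
    ∀ (s : Finset ℕ) (σ : Set ℕ), σ = (↑s : Set ℕ) →
      Dense (Submodule.span ℝ
        (Set.range fun i : ℕ => if i ∈ σ then φ i else ψ i) : Set H) := by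
  intro s
  induction s using Finset.induction_on with
  | empty =>
    intro σ hσ
    have he : (fun i : ℕ => if i ∈ σ then φ i else ψ i) = ψ := by
      funext i
      rw [if_neg]
      rw [hσ]
      simp
    rw [he]
    exact hψdense
  | insert a s hj ih =>
    intro σ hσ
    obtain ⟨τs, hτs⟩ : ∃ τs : Set ℕ, τs = ((↑s) : Set ℕ) := ⟨_, rfl⟩
    refine swap_dense (fun i : ℕ => if i ∈ τs then φ i else ψ i) _ a ?_ (ih τs hτs) A hA
      (hlow σ)
    intro i hi
    refine if_congr ?_ rfl rfl
    rw [hτs, hσ]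
    simp [Finset.mem_insert, hi]

private lemma bessel (g : ℕ → H) (B' : ℝ) (hB' : 0 < B')
    (hup : ∀ c : ℕ →₀ ℝ,
      ‖∑ i ∈ c.support, c i • g i‖ ^ 2 ≤ B' * (∑ i ∈ c.support, (c i) ^ 2))
    (x : H) (s : Finset ℕ) :
    ∑ i ∈ s, ⟪x, g i⟫ ^ 2 ≤ B' * ‖x‖ ^ 2 := by
  classical
  set c : ℕ →₀ ℝ := Finsupp.onFinset s (fun i => if i ∈ s then ⟪x, g i⟫ else 0)
    (by intro i h; by_contra hi; simp [hi] at h) with hc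
  have hcs : c.support ⊆ s := Finsupp.support_onFinset_subset
  have h1 : ∑ i ∈ c.support, (c i)^2 = ∑ i ∈ s, ⟪x, g i⟫^2 := by
    rw [Finset.sum_subset hcs (fun i _ hni => by
      rw [Finsupp.notMem_support_iff.mp hni]; ring)]
    exact Finset.sum_congr rfl (fun i hi => by simp [hc, hi])
  have h2 : ∑ i ∈ c.support, c i • g i = ∑ i ∈ s, ⟪x, g i⟫ • g i := by
    rw [Finset.sum_subset hcs (fun i _ hni => by
      rw [Finsupp.notMem_support_iff.mp hni]; simp)]
    exact Finset.sum_congr rfl (fun i hi => by simp [hc, hi])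
  set v := ∑ i ∈ s, ⟪x, g i⟫ • g i with hv
  set S := ∑ i ∈ s, ⟪x, g i⟫ ^ 2 with hS
  have hSnn : 0 ≤ S := Finset.sum_nonneg fun i _ => sq_nonneg _
  have hxv : ⟪x, v⟫ = S := by
    rw [hv, inner_sum, hS]
    exact Finset.sum_congr rfl fun i _ => by rw [real_inner_smul_right]; ring
  have hvB : ‖v‖^2 ≤ B' * S := by
    have h := hup c; rw [h1, h2] at h; exact h
  have hcs2 : S ≤ ‖x‖ * ‖v‖ := by rw [← hxv]; exact real_inner_le_norm x v
  rcases eq_or_lt_of_le hSnn with h0 | h0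
  · rw [← h0]; positivity
  · nlinarith [norm_nonneg x, norm_nonneg v,
      mul_le_mul hcs2 hcs2 hSnn (mul_nonneg (norm_nonneg x) (norm_nonneg v)),
      mul_le_mul_of_nonneg_left hvB (sq_nonneg ‖x‖)]

private lemma weave_dense [CompleteSpace H] (φ ψ : ℕ → H) (A : ℝ) (hA : 0 < A)
    (Bψ : ℝ) (hBψ : 0 < Bψ)
    (hψup : ∀ c : ℕ →₀ ℝ,
      ‖∑ i ∈ c.support, c i • ψ i‖ ^ 2 ≤ Bψ * (∑ i ∈ c.support, (c i) ^ 2))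
    (hψdense : Dense (Submodule.span ℝ (Set.range ψ) : Set H))
    (hweave : ∀ σ : Set ℕ, ∀ c : ℕ →₀ ℝ,
      A * (∑ i ∈ c.support, (c i) ^ 2) ≤
        ‖∑ i ∈ c.support, c i • (if i ∈ σ then φ i else ψ i)‖ ^ 2)
    (σ : Set ℕ) :
    Dense (Submodule.span ℝ
      (Set.range fun i : ℕ => if i ∈ σ then φ i else ψ i) : Set H) := by
  rw [Submodule.dense_iff_topologicalClosure_eq_top, Submodule.topologicalClosure_eq_top_iff,
    Submodule.eq_bot_iff]
  intro x hx
  have hx' : ∀ i : ℕ, ⟪x, (if i ∈ σ then φ i else ψ i)⟫ = 0 := fun i => by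
    rw [real_inner_comm]
    exact Submodule.inner_right_of_mem_orthogonal (Submodule.subset_span (Set.mem_range_self i)) hx
  have hsummable : Summable (fun i => ⟪x, ψ i⟫ ^ 2) := by
    apply summable_of_sum_range_le (fun i => sq_nonneg _)
    intro n
    exact bessel ψ Bψ hBψ hψup x (Finset.range n)
  have key : ∀ ε : ℝ, 0 < ε → ‖x‖^2 ≤ ‖x‖*ε + (‖x‖+ε) * ε / Real.sqrt A := by
    intro ε hε
    obtain ⟨s₀, hs₀⟩ := summable_iff_vanishing.mp hsummable (Set.Iio (ε^2))
      (Iio_mem_nhds (by positivity))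
    set n := s₀.sup id with hn
    obtain ⟨τ, hτ⟩ : ∃ τ : Set ℕ, τ = ((↑((Finset.range (n+1)).filter (· ∈ σ))) : Set ℕ) :=
      ⟨_, rfl⟩
    set w : ℕ → H := fun i => if i ∈ τ then φ i else ψ i with hw
    have hdense := finite_weave_dense φ ψ A hA hψdense hweave
      ((Finset.range (n+1)).filter (· ∈ σ)) τ hτ
    have hxmem : x ∈ closure (Submodule.span ℝ (Set.range w) : Set H) := hdense x
    rw [Metric.mem_closure_iff] at hxmem
    obtain ⟨v, hv, hdist⟩ := hxmem ε hε
    obtain ⟨c, hc⟩ := Finsupp.mem_span_range_iff_exists_finsupp.mp hv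
    have hvsum : v = ∑ i ∈ c.support, c i • w i := by rw [← hc]; rfl
    rw [dist_eq_norm] at hdist
    set T₂ := c.support.filter (fun i => ¬ i ≤ n) with hT2
    have hsplit : v = (∑ i ∈ c.support.filter (fun i => i ≤ n), c i • w i)
        + ∑ i ∈ T₂, c i • w i := by
      rw [hvsum, hT2, Finset.sum_filter_add_sum_filter_not]
    have hmemsn : ∀ i : ℕ, i ≤ n → ((i ∈ τ) ↔ (i ∈ σ)) := by
      intro i hi
      rw [hτ]
      simp [Finset.mem_coe, Finset.mem_filter, Finset.mem_range, Nat.lt_succ_iff, hi]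
    have hxv : ⟪x, v⟫ = ∑ i ∈ T₂, c i * ⟪x, ψ i⟫ := by
      rw [hsplit, inner_add_right, inner_sum, inner_sum]
      have hz : ∀ i ∈ c.support.filter (fun i => i ≤ n), ⟪x, c i • w i⟫ = 0 := by
        intro i hi
        rw [Finset.mem_filter] at hi
        have hwi : w i = (if i ∈ σ then φ i else ψ i) := by
          simp only [hw]
          exact if_congr (hmemsn i hi.2) rfl rfl
        rw [real_inner_smul_right, hwi, hx' i, mul_zero]
      have h2 : ∀ i ∈ T₂, ⟪x, c i • w i⟫ = c i * ⟪x, ψ i⟫ := by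
        intro i hi
        rw [hT2, Finset.mem_filter] at hi
        have hwi : w i = ψ i := by
          simp only [hw]
          rw [if_neg]
          intro hmem
          rw [hτ, Finset.mem_coe, Finset.mem_filter, Finset.mem_range] at hmem
          exact hi.2 (Nat.lt_succ_iff.mp hmem.1)
        rw [real_inner_smul_right, hwi]
      rw [Finset.sum_eq_zero hz, Finset.sum_congr rfl h2, zero_add]
    have hT2c : A * ∑ i ∈ T₂, (c i)^2 ≤ ‖v‖^2 := by
      have hlow := hweave τ c
      rw [hτ] at hlow  -- no-op safeguard
      rw [← hτ] at hlow
      have hv2 : A * ∑ i ∈ c.support, (c i)^2 ≤ ‖v‖^2 := by rw [hvsum]; exact hlow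
      have hmono : ∑ i ∈ T₂, (c i)^2 ≤ ∑ i ∈ c.support, (c i)^2 :=
        Finset.sum_le_sum_of_subset_of_nonneg (Finset.filter_subset _ _)
          (fun i _ _ => sq_nonneg _)
      nlinarith
    have hT2g : ∑ i ∈ T₂, ⟪x, ψ i⟫^2 < ε^2 := by
      have hdisj : Disjoint T₂ s₀ := by
        rw [Finset.disjoint_left]
        intro i hi his
        rw [hT2, Finset.mem_filter] at hi
        exact hi.2 (Finset.le_sup (f := id) his)
      exact hs₀ T₂ hdisj
    have hCS : (⟪x, v⟫)^2 ≤ (‖v‖^2/A) * ε^2 := by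
      rw [hxv]
      calc (∑ i ∈ T₂, c i * ⟪x, ψ i⟫)^2
          ≤ (∑ i ∈ T₂, (c i)^2) * ∑ i ∈ T₂, ⟪x, ψ i⟫^2 :=
        Finset.sum_mul_sq_le_sq_mul_sq T₂ _ _
      _ ≤ (‖v‖^2/A) * ε^2 := by
        apply mul_le_mul _ hT2g.le (Finset.sum_nonneg fun i _ => sq_nonneg _) (by positivity)
        rw [le_div_iff₀ hA]
        nlinarith
    have hxv_le : ⟪x, v⟫ ≤ ‖v‖ * ε / Real.sqrt A := by
      have h0 : 0 ≤ ‖v‖ * ε / Real.sqrt A := by positivity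
      have heq : (‖v‖^2/A) * ε^2 = (‖v‖ * ε / Real.sqrt A)^2 := by
        rw [div_pow, mul_pow, Real.sq_sqrt hA.le]; ring
      rw [heq] at hCS
      calc ⟪x, v⟫ ≤ |⟪x, v⟫| := le_abs_self _
      _ = Real.sqrt ((⟪x, v⟫)^2) := (Real.sqrt_sq_eq_abs _).symm
      _ ≤ Real.sqrt ((‖v‖ * ε / Real.sqrt A)^2) := Real.sqrt_le_sqrt hCS
      _ = ‖v‖ * ε / Real.sqrt A := Real.sqrt_sq h0
    have hvnorm : ‖v‖ ≤ ‖x‖ + ε := by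
      have h := norm_sub_norm_le v x
      rw [norm_sub_rev] at h
      linarith
    have hfinal : ‖x‖^2 = ⟪x, v⟫ + ⟪x, x - v⟫ := by
      rw [← inner_add_right, add_sub_cancel, real_inner_self_eq_norm_sq]
    have h5 : ⟪x, x - v⟫ ≤ ‖x‖ * ε :=
      le_trans (real_inner_le_norm x (x-v))
        (mul_le_mul_of_nonneg_left hdist.le (norm_nonneg x))
    have h6 : ‖v‖ * ε / Real.sqrt A ≤ (‖x‖+ε) * ε / Real.sqrt A := by
      gcongr
    linarith
  have hle : ‖x‖^2 ≤ 0 := by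
    have hcont : Continuous (fun ε : ℝ => ‖x‖*ε + (‖x‖+ε) * ε / Real.sqrt A) := by
      apply Continuous.add
      · exact continuous_const.mul continuous_id
      · exact ((continuous_const.add continuous_id).mul continuous_id).div_const _
    have htend : Filter.Tendsto (fun ε : ℝ => ‖x‖*ε + (‖x‖+ε) * ε / Real.sqrt A)
        (nhdsWithin 0 (Set.Ioi 0)) (nhds 0) := by
      have h := hcont.tendsto 0
      simp only [mul_zero, zero_div, add_zero] at h
      exact h.mono_left nhdsWithin_le_nhds
    exact ge_of_tendsto htend (eventually_nhdsWithin_of_forall (fun ε hε => key ε hε))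
  have hx0 : ‖x‖ = 0 := by nlinarith [norm_nonneg x]
  exact norm_eq_zero.mp hx0

end Aux

/-- If `φ` and `ψ` are Riesz bases and every weaving is a Riesz sequence with
uniform bounds `A, B`, then every weaving (for arbitrary `σ ⊆ ℕ`) is in fact a
Riesz basis for `H`. -/
theorem stmt_8 {H : Type*} [NormedAddCommGroup H] [InnerProductSpace ℝ H]
    (φ ψ : ℕ → H) (A B : ℝ) (hA : 0 < A) (hAB : A ≤ B)
    (hφRiesz : ∃ A' B' : ℝ, 0 < A' ∧ A' ≤ B' ∧ ∀ c : ℕ →₀ ℝ,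
      A' * (∑ i ∈ c.support, (c i) ^ 2) ≤ ‖∑ i ∈ c.support, c i • φ i‖ ^ 2 ∧
      ‖∑ i ∈ c.support, c i • φ i‖ ^ 2 ≤ B' * (∑ i ∈ c.support, (c i) ^ 2))
    (hφdense : Dense (Submodule.span ℝ (Set.range φ) : Set H))
    (hψRiesz : ∃ A' B' : ℝ, 0 < A' ∧ A' ≤ B' ∧ ∀ c : ℕ →₀ ℝ,
      A' * (∑ i ∈ c.support, (c i) ^ 2) ≤ ‖∑ i ∈ c.support, c i • ψ i‖ ^ 2 ∧
      ‖∑ i ∈ c.support, c i • ψ i‖ ^ 2 ≤ B' * (∑ i ∈ c.support, (c i) ^ 2))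
    (hψdense : Dense (Submodule.span ℝ (Set.range ψ) : Set H))
    (hweave : ∀ σ : Set ℕ, ∀ c : ℕ →₀ ℝ,
      A * (∑ i ∈ c.support, (c i) ^ 2) ≤
        ‖∑ i ∈ c.support, c i • (if i ∈ σ then φ i else ψ i)‖ ^ 2 ∧
      ‖∑ i ∈ c.support, c i • (if i ∈ σ then φ i else ψ i)‖ ^ 2 ≤
        B * (∑ i ∈ c.support, (c i) ^ 2)) :
    ∀ σ : Set ℕ,
      (∀ c : ℕ →₀ ℝ,
        A * (∑ i ∈ c.support, (c i) ^ 2) ≤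
          ‖∑ i ∈ c.support, c i • (if i ∈ σ then φ i else ψ i)‖ ^ 2 ∧
        ‖∑ i ∈ c.support, c i • (if i ∈ σ then φ i else ψ i)‖ ^ 2 ≤
          B * (∑ i ∈ c.support, (c i) ^ 2)) ∧
      Dense (Submodule.span ℝ
        (Set.range fun i : ℕ => if i ∈ σ then φ i else ψ i) : Set H) := by
  intro σ
  refine ⟨hweave σ, ?_⟩
  obtain ⟨Aψ, Bψ, hAψ, hABψ, hψ⟩ := hψRiesz
  -- move to the completion of H
  set K := UniformSpace.Completion H with hK
  let e : H →ₗᵢ[ℝ] K := UniformSpace.Completion.toComplₗᵢ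
  have hmap : ∀ (g : ℕ → H) (s : Finset ℕ) (c : ℕ → ℝ),
      (∑ i ∈ s, c i • e (g i)) = e (∑ i ∈ s, c i • g i) := by
    intro g s c
    rw [map_sum]
    exact Finset.sum_congr rfl fun i _ => (e.map_smul _ _).symm
  set Φ : ℕ → K := fun i => e (φ i) with hΦ
  set Ψ : ℕ → K := fun i => e (ψ i) with hΨ
  have hite : ∀ (τ : Set ℕ) (i : ℕ),
      (if i ∈ τ then Φ i else Ψ i) = e (if i ∈ τ then φ i else ψ i) := by
    intro τ i
    exact (apply_ite e _ _ _).symm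
  -- transferred hypotheses
  have hψupK : ∀ c : ℕ →₀ ℝ,
      ‖∑ i ∈ c.support, c i • Ψ i‖ ^ 2 ≤ Bψ * (∑ i ∈ c.support, (c i) ^ 2) := by
    intro c
    rw [show (∑ i ∈ c.support, c i • Ψ i) = e (∑ i ∈ c.support, c i • ψ i) from hmap ψ _ _,
      e.norm_map]
    exact (hψ c).2
  have hweaveK : ∀ τ : Set ℕ, ∀ c : ℕ →₀ ℝ,
      A * (∑ i ∈ c.support, (c i) ^ 2) ≤
        ‖∑ i ∈ c.support, c i • (if i ∈ τ then Φ i else Ψ i)‖ ^ 2 := by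
    intro τ c
    have : (∑ i ∈ c.support, c i • (if i ∈ τ then Φ i else Ψ i))
        = e (∑ i ∈ c.support, c i • (if i ∈ τ then φ i else ψ i)) := by
      rw [← hmap (fun i => if i ∈ τ then φ i else ψ i) c.support c]
      exact Finset.sum_congr rfl fun i _ => by rw [hite]
    rw [this, e.norm_map]
    exact (hweave τ c).1
  have hdr : DenseRange (⇑e) := by
    rw [UniformSpace.Completion.coe_toComplₗᵢ (𝕜 := ℝ)]
    exact UniformSpace.Completion.denseRange_coe
  have himg : ∀ g : ℕ → H,
      (Submodule.span ℝ (Set.range fun i : ℕ => e (g i)) : Set K)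
        = ⇑e '' (Submodule.span ℝ (Set.range g) : Set H) := by
    intro g
    have h1 : (Set.range fun i : ℕ => e (g i)) = ⇑e '' Set.range g := by
      rw [← Set.range_comp]; rfl
    rw [h1]
    exact congrArg SetLike.coe (Submodule.map_span e.toLinearMap (Set.range g)).symm
  have hψdenseK : Dense (Submodule.span ℝ (Set.range Ψ) : Set K) := by
    rw [hΨ, himg ψ]
    exact hdr.dense_image e.continuous hψdense
  have hdenseK := weave_dense Φ Ψ A hA Bψ (lt_of_lt_of_le hAψ hABψ) hψupK hψdenseK hweaveK σ
  -- pull back density along the isometric embedding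
  have hKimg : (Submodule.span ℝ (Set.range fun i : ℕ => if i ∈ σ then Φ i else Ψ i) : Set K)
      = ⇑e '' (Submodule.span ℝ
          (Set.range fun i : ℕ => if i ∈ σ then φ i else ψ i) : Set H) := by
    have h1 : (fun i : ℕ => if i ∈ σ then Φ i else Ψ i)
        = fun i : ℕ => e (if i ∈ σ then φ i else ψ i) := by
      funext i; exact hite σ i
    rw [h1, himg]
  rw [hKimg] at hdenseK
  have hemb : Topology.IsEmbedding (⇑e) := e.isometry.isEmbedding
  rw [dense_iff_closure_eq] at hdenseK ⊢
  rw [hemb.closure_eq_preimage_closure_image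
    (Submodule.span ℝ (Set.range fun i : ℕ => if i ∈ σ then φ i else ψ i) : Set H),
    hdenseK]
  exact Set.preimage_univ
end

section
/- Quantitative version of Lemma (i)⇒(ii): If {φ_i}_{i∈I} ∪ {ψ_j}_{j∈J} is a Riesz sequence with lower bound A and upper bound B (where {φ_i} and {ψ_j} are Riesz sequences), then for any x in the closed span of {φ_i} and y in the closed span of {ψ_j} with ‖x‖ = 1 or ‖y‖ = 1, one has ‖x − y‖² ≥ A/B. -/
open scoped RealInnerProductSpace BigOperators Classical

lemma sumElim_support_sum {I J : Type*} {M : Type*} [AddCommMonoid M]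
    (a : I →₀ ℝ) (b : J →₀ ℝ) (f : (I ⊕ J) → ℝ → M) (hf : ∀ k, f k 0 = 0) :
    ∑ k ∈ (Finsupp.sumElim a b).support, f k (Finsupp.sumElim a b k)
      = ∑ i ∈ a.support, f (Sum.inl i) (a i) + ∑ j ∈ b.support, f (Sum.inr j) (b j) := by
  classical
  have hsub : (Finsupp.sumElim a b).support ⊆
      a.support.map ⟨Sum.inl, Sum.inl_injective⟩ ∪ b.support.map ⟨Sum.inr, Sum.inr_injective⟩ := by
    intro k hk
    rcases k with i | j
    · simp only [Finsupp.mem_support_iff, Finsupp.sumElim_inl] at hk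
      simp [Finsupp.mem_support_iff, hk]
    · simp only [Finsupp.mem_support_iff, Finsupp.sumElim_inr] at hk
      simp [Finsupp.mem_support_iff, hk]
  rw [Finset.sum_subset hsub, Finset.sum_union, Finset.sum_map, Finset.sum_map]
  · simp [Finsupp.sumElim_inl, Finsupp.sumElim_inr]
  · rw [Finset.disjoint_left]
    rintro k hk hk'
    rcases k with i | j
    · simp at hk'
    · simp at hk
  · intro k _ hk
    rw [Finsupp.notMem_support_iff] at hk
    rw [hk, hf]

/-- Quantitative version of (i) ⇒ (ii): if the union of two Riesz sequences is a
Riesz sequence with bounds `A, B`, then any `x` in the closed span of `φ` and `y`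
in the closed span of `ψ` with `‖x‖ = 1` or `‖y‖ = 1` satisfy `‖x − y‖² ≥ A/B`. -/
theorem stmt_12 {H : Type*} [NormedAddCommGroup H] [InnerProductSpace ℝ H]
    {I J : Type*} (φ : I → H) (ψ : J → H) (A B : ℝ) (hA : 0 < A) (hAB : A ≤ B)
    (hφ : ∃ A' B' : ℝ, 0 < A' ∧ A' ≤ B' ∧ ∀ c : I →₀ ℝ,
      A' * (∑ i ∈ c.support, (c i) ^ 2) ≤ ‖∑ i ∈ c.support, c i • φ i‖ ^ 2 ∧
      ‖∑ i ∈ c.support, c i • φ i‖ ^ 2 ≤ B' * (∑ i ∈ c.support, (c i) ^ 2))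
    (hψ : ∃ A' B' : ℝ, 0 < A' ∧ A' ≤ B' ∧ ∀ c : J →₀ ℝ,
      A' * (∑ j ∈ c.support, (c j) ^ 2) ≤ ‖∑ j ∈ c.support, c j • ψ j‖ ^ 2 ∧
      ‖∑ j ∈ c.support, c j • ψ j‖ ^ 2 ≤ B' * (∑ j ∈ c.support, (c j) ^ 2))
    (hunion : ∀ c : (I ⊕ J) →₀ ℝ,
      A * (∑ k ∈ c.support, (c k) ^ 2) ≤ ‖∑ k ∈ c.support, c k • Sum.elim φ ψ k‖ ^ 2 ∧
      ‖∑ k ∈ c.support, c k • Sum.elim φ ψ k‖ ^ 2 ≤ B * (∑ k ∈ c.support, (c k) ^ 2)) :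
    ∀ x y : H, x ∈ (Submodule.span ℝ (Set.range φ)).topologicalClosure →
      y ∈ (Submodule.span ℝ (Set.range ψ)).topologicalClosure →
      (‖x‖ = 1 ∨ ‖y‖ = 1) → A / B ≤ ‖x - y‖ ^ 2 := by
  classical
  have hB : 0 < B := lt_of_lt_of_le hA hAB
  -- main inequality on the algebraic spans
  have key : ∀ x ∈ Submodule.span ℝ (Set.range φ), ∀ y ∈ Submodule.span ℝ (Set.range ψ),
      A / B * ‖x‖ ^ 2 ≤ ‖x - y‖ ^ 2 ∧ A / B * ‖y‖ ^ 2 ≤ ‖x - y‖ ^ 2 := by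
    intro x hx y hy
    obtain ⟨a, rfl⟩ := Finsupp.mem_span_range_iff_exists_finsupp.mp hx
    obtain ⟨b, rfl⟩ := Finsupp.mem_span_range_iff_exists_finsupp.mp hy
    set c : (I ⊕ J) →₀ ℝ := Finsupp.sumElim a (-b) with hc
    have hdiff : ∑ k ∈ c.support, c k • Sum.elim φ ψ k
        = a.sum (fun i v => v • φ i) - b.sum (fun j v => v • ψ j) := by
      rw [hc, sumElim_support_sum a (-b) (fun k v => v • Sum.elim φ ψ k) (by simp)]
      simp [Finsupp.sum, sub_eq_add_neg, ← Finset.sum_neg_distrib]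
    have hsq : ∑ k ∈ c.support, (c k) ^ 2
        = ∑ i ∈ a.support, (a i) ^ 2 + ∑ j ∈ b.support, (b j) ^ 2 := by
      rw [hc, sumElim_support_sum a (-b) (fun _ v => v ^ 2) (by simp)]
      simp
    have hlower := (hunion c).1
    rw [hdiff, hsq] at hlower
    -- upper bounds on ‖x‖², ‖y‖² via the union with one side zero
    have hxup : ‖a.sum (fun i v => v • φ i)‖ ^ 2 ≤ B * ∑ i ∈ a.support, (a i) ^ 2 := by
      have h := (hunion (Finsupp.sumElim a 0)).2
      rw [sumElim_support_sum a 0 (fun k v => v • Sum.elim φ ψ k) (by simp),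
        sumElim_support_sum a 0 (fun _ v => v ^ 2) (by simp)] at h
      simpa [Finsupp.sum] using h
    have hyup : ‖b.sum (fun j v => v • ψ j)‖ ^ 2 ≤ B * ∑ j ∈ b.support, (b j) ^ 2 := by
      have h := (hunion (Finsupp.sumElim (0 : I →₀ ℝ) b)).2
      rw [sumElim_support_sum 0 b (fun k v => v • Sum.elim φ ψ k) (by simp),
        sumElim_support_sum 0 b (fun _ v => v ^ 2) (by simp)] at h
      simpa [Finsupp.sum] using h
    have hbnn : (0:ℝ) ≤ ∑ j ∈ b.support, (b j) ^ 2 :=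
      Finset.sum_nonneg fun _ _ => sq_nonneg _
    have hann : (0:ℝ) ≤ ∑ i ∈ a.support, (a i) ^ 2 :=
      Finset.sum_nonneg fun _ _ => sq_nonneg _
    constructor
    · rw [div_mul_eq_mul_div, div_le_iff₀ hB]
      calc A * ‖a.sum (fun i v => v • φ i)‖ ^ 2
          ≤ A * (B * ∑ i ∈ a.support, (a i) ^ 2) := by
            exact mul_le_mul_of_nonneg_left hxup hA.le
        _ = B * (A * ∑ i ∈ a.support, (a i) ^ 2) := by ring
        _ ≤ B * (A * (∑ i ∈ a.support, (a i) ^ 2 + ∑ j ∈ b.support, (b j) ^ 2)) := by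
            apply mul_le_mul_of_nonneg_left _ hB.le
            apply mul_le_mul_of_nonneg_left _ hA.le
            linarith
        _ ≤ ‖a.sum (fun i v => v • φ i) - b.sum (fun j v => v • ψ j)‖ ^ 2 * B := by
            rw [mul_comm]
            exact mul_le_mul_of_nonneg_right hlower hB.le
    · rw [div_mul_eq_mul_div, div_le_iff₀ hB]
      calc A * ‖b.sum (fun j v => v • ψ j)‖ ^ 2
          ≤ A * (B * ∑ j ∈ b.support, (b j) ^ 2) := by
            exact mul_le_mul_of_nonneg_left hyup hA.le
        _ = B * (A * ∑ j ∈ b.support, (b j) ^ 2) := by ring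
        _ ≤ B * (A * (∑ i ∈ a.support, (a i) ^ 2 + ∑ j ∈ b.support, (b j) ^ 2)) := by
            apply mul_le_mul_of_nonneg_left _ hB.le
            apply mul_le_mul_of_nonneg_left _ hA.le
            linarith
        _ ≤ ‖a.sum (fun i v => v • φ i) - b.sum (fun j v => v • ψ j)‖ ^ 2 * B := by
            rw [mul_comm]
            exact mul_le_mul_of_nonneg_right hlower hB.le
  -- pass to closures
  have keycl : ∀ x ∈ (Submodule.span ℝ (Set.range φ)).topologicalClosure,
      ∀ y ∈ (Submodule.span ℝ (Set.range ψ)).topologicalClosure,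
      A / B * ‖x‖ ^ 2 ≤ ‖x - y‖ ^ 2 ∧ A / B * ‖y‖ ^ 2 ≤ ‖x - y‖ ^ 2 := by
    intro x hx y hy
    have hx' : x ∈ closure (Submodule.span ℝ (Set.range φ) : Set H) := hx
    have hy' : y ∈ closure (Submodule.span ℝ (Set.range ψ) : Set H) := hy
    have hmem : (x, y) ∈ closure ((Submodule.span ℝ (Set.range φ) : Set H) ×ˢ
        (Submodule.span ℝ (Set.range ψ) : Set H)) := by
      rw [closure_prod_eq]; exact ⟨hx', hy'⟩
    have hclosed : IsClosed {p : H × H | A / B * ‖p.1‖ ^ 2 ≤ ‖p.1 - p.2‖ ^ 2 ∧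
        A / B * ‖p.2‖ ^ 2 ≤ ‖p.1 - p.2‖ ^ 2} := by
      have c0 : Continuous fun p : H × H => ‖p.1 - p.2‖ ^ 2 :=
        ((continuous_fst.sub continuous_snd).norm).pow 2
      have c1 : Continuous fun p : H × H => A / B * ‖p.1‖ ^ 2 :=
        continuous_const.mul ((continuous_fst.norm).pow 2)
      have c2 : Continuous fun p : H × H => A / B * ‖p.2‖ ^ 2 :=
        continuous_const.mul ((continuous_snd.norm).pow 2)
      exact (isClosed_le c1 c0).inter (isClosed_le c2 c0)
    have hsubset : ((Submodule.span ℝ (Set.range φ) : Set H) ×ˢ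
        (Submodule.span ℝ (Set.range ψ) : Set H)) ⊆
        {p : H × H | A / B * ‖p.1‖ ^ 2 ≤ ‖p.1 - p.2‖ ^ 2 ∧
          A / B * ‖p.2‖ ^ 2 ≤ ‖p.1 - p.2‖ ^ 2} := by
      rintro ⟨x, y⟩ ⟨hx, hy⟩
      exact key x hx y hy
    exact closure_minimal hsubset hclosed hmem
  intro x y hx hy hnorm
  obtain ⟨h1, h2⟩ := keycl x hx y hy
  rcases hnorm with h | h
  · rw [h] at h1; simpa using h1
  · rw [h] at h2; simpa using h2
end

section
/- Let Φ = {φ_i}_{i∈I} and Ψ = {ψ_i}_{i∈I} be frames for H with frame bounds A₁, B₁ and A₂, B₂ respectively. Suppose there is 0 < λ < 1 with λ(√B₁ + √B₂) ≤ A₁/2 such that ‖∑_{i∈I} a_i(φ_i − ψ_i)‖ ≤ λ(∑|a_i|²)^{1/2} for all ℓ² sequences {a_i}. Then for every σ ⊆ I, the family {ψ_i}_{i∈σ} ∪ {φ_i}_{i∈σ^c} is a frame for H with frame bounds A₁/2 and B₁+B₂; hence Φ and Ψ are woven. -/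
open scoped RealInnerProductSpace BigOperators Classical

/-- Cauchy–Schwarz for tsums. -/
lemma cs_tsum {I : Type*} {f g : I → ℝ} (hf : Summable fun i => f i ^ 2)
    (hg : Summable fun i => g i ^ 2) :
    Summable (fun i => f i * g i) ∧
      (∑' i, f i * g i) ≤ Real.sqrt (∑' i, f i ^ 2) * Real.sqrt (∑' i, g i ^ 2) := by
  have habs : Summable fun i => |f i * g i| := by
    refine Summable.of_nonneg_of_le (fun i => abs_nonneg _) (fun i => ?_) (hf.add hg)
    rw [abs_mul]
    nlinarith [sq_nonneg (|f i| - |g i|), sq_abs (f i), sq_abs (g i),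
      abs_nonneg (f i), abs_nonneg (g i)]
  have hsum : Summable (fun i => f i * g i) := habs.of_abs
  refine ⟨hsum, ?_⟩
  have hbound : ∀ S : Finset I, ∑ i ∈ S, |f i * g i| ≤
      Real.sqrt (∑' i, f i ^ 2) * Real.sqrt (∑' i, g i ^ 2) := by
    intro S
    have hcs : (∑ i ∈ S, |f i| * |g i|) ^ 2 ≤
        (∑ i ∈ S, f i ^ 2) * ∑ i ∈ S, g i ^ 2 := by
      have := Finset.sum_mul_sq_le_sq_mul_sq S (fun i => |f i|) (fun i => |g i|)
      simpa [sq_abs] using this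
    have h1 : ∑ i ∈ S, f i ^ 2 ≤ ∑' i, f i ^ 2 :=
      Summable.sum_le_tsum S (fun i _ => sq_nonneg _) hf
    have h2 : ∑ i ∈ S, g i ^ 2 ≤ ∑' i, g i ^ 2 :=
      Summable.sum_le_tsum S (fun i _ => sq_nonneg _) hg
    have hS1 : (0:ℝ) ≤ ∑ i ∈ S, f i ^ 2 := Finset.sum_nonneg fun i _ => sq_nonneg _
    calc ∑ i ∈ S, |f i * g i| = ∑ i ∈ S, |f i| * |g i| := by simp [abs_mul]
      _ ≤ Real.sqrt ((∑ i ∈ S, f i ^ 2) * ∑ i ∈ S, g i ^ 2) := Real.le_sqrt_of_sq_le hcs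
      _ ≤ Real.sqrt (∑' i, f i ^ 2) * Real.sqrt (∑' i, g i ^ 2) := by
          rw [Real.sqrt_mul hS1]
          exact mul_le_mul (Real.sqrt_le_sqrt h1) (Real.sqrt_le_sqrt h2)
            (Real.sqrt_nonneg _) (Real.sqrt_nonneg _)
  calc (∑' i, f i * g i) ≤ ∑' i, |f i * g i| :=
        Summable.tsum_le_tsum (fun i => le_abs_self _) hsum habs
    _ ≤ _ := Summable.tsum_le_of_sum_le habs hbound

/-- Perturbation theorem: if `‖∑ aᵢ(φᵢ − ψᵢ)‖ ≤ λ‖a‖₂` for all sequences with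
`λ(√B₁ + √B₂) ≤ A₁/2`, then every weaving `{ψ_i}_{i∈σ} ∪ {φ_i}_{i∈σᶜ}` is a frame
with bounds `A₁/2` and `B₁ + B₂`; hence `Φ` and `Ψ` are woven. -/
theorem stmt_16 {H : Type*} [NormedAddCommGroup H] [InnerProductSpace ℝ H]
    {I : Type*} (φ ψ : I → H) (A₁ B₁ A₂ B₂ : ℝ)
    (hA₁ : 0 < A₁) (hAB₁ : A₁ ≤ B₁) (hA₂ : 0 < A₂) (hAB₂ : A₂ ≤ B₂)
    (hφ : ∀ x : H,
      A₁ * ‖x‖ ^ 2 ≤ (∑' i : I, ⟪x, φ i⟫ ^ 2) ∧ (∑' i : I, ⟪x, φ i⟫ ^ 2) ≤ B₁ * ‖x‖ ^ 2)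
    (hψ : ∀ x : H,
      A₂ * ‖x‖ ^ 2 ≤ (∑' i : I, ⟪x, ψ i⟫ ^ 2) ∧ (∑' i : I, ⟪x, ψ i⟫ ^ 2) ≤ B₂ * ‖x‖ ^ 2)
    (lam : ℝ) (hlam0 : 0 < lam) (hlam1 : lam < 1)
    (hlam : lam * (Real.sqrt B₁ + Real.sqrt B₂) ≤ A₁ / 2)
    (hperturb : ∀ a : I →₀ ℝ,
      ‖∑ i ∈ a.support, a i • (φ i - ψ i)‖ ≤
        lam * Real.sqrt (∑ i ∈ a.support, (a i) ^ 2)) :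
    ∀ σ : Set I, ∀ x : H,
      A₁ / 2 * ‖x‖ ^ 2 ≤ (∑' i : I, ⟪x, if i ∈ σ then ψ i else φ i⟫ ^ 2) ∧
      (∑' i : I, ⟪x, if i ∈ σ then ψ i else φ i⟫ ^ 2) ≤ (B₁ + B₂) * ‖x‖ ^ 2 := by
  intro σ x
  by_cases hx0 : x = 0
  · subst hx0; simp
  have hxn : (0:ℝ) < ‖x‖ := norm_pos_iff.mpr hx0
  have hx2 : (0:ℝ) < ‖x‖ ^ 2 := by positivity
  set F : I → ℝ := fun i => ⟪x, φ i⟫ with hF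
  set G : I → ℝ := fun i => ⟪x, ψ i⟫ with hG
  -- summability of the two frames' coefficient sequences
  have Sφ : Summable fun i => F i ^ 2 := by
    by_contra h
    have h0 : (∑' i : I, ⟪x, φ i⟫ ^ 2) = 0 := tsum_eq_zero_of_not_summable h
    have := (hφ x).1
    rw [h0] at this; nlinarith
  have Sψ : Summable fun i => G i ^ 2 := by
    by_contra h
    have h0 : (∑' i : I, ⟪x, ψ i⟫ ^ 2) = 0 := tsum_eq_zero_of_not_summable h
    have := (hψ x).1
    rw [h0] at this; nlinarith
  -- the mixed family
  set m : I → ℝ := fun i => ⟪x, if i ∈ σ then ψ i else φ i⟫ ^ 2 with hm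
  have hm_le : ∀ i, m i ≤ F i ^ 2 + G i ^ 2 := by
    intro i
    simp only [hm, hF, hG]
    split <;> nlinarith [sq_nonneg (⟪x, φ i⟫ : ℝ), sq_nonneg (⟪x, ψ i⟫ : ℝ)]
  have Sm : Summable m :=
    Summable.of_nonneg_of_le (fun i => sq_nonneg _) hm_le (Sφ.add Sψ)
  have hupper : (∑' i, m i) ≤ (B₁ + B₂) * ‖x‖ ^ 2 := by
    calc (∑' i, m i) ≤ ∑' i, (F i ^ 2 + G i ^ 2) := Summable.tsum_le_tsum hm_le Sm (Sφ.add Sψ)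
      _ = (∑' i, F i ^ 2) + ∑' i, G i ^ 2 := Summable.tsum_add Sφ Sψ
      _ ≤ B₁ * ‖x‖ ^ 2 + B₂ * ‖x‖ ^ 2 := add_le_add (hφ x).2 (hψ x).2
      _ = (B₁ + B₂) * ‖x‖ ^ 2 := by ring
  -- the perturbation sequence, restricted to σ
  set v : I → ℝ := fun i => if i ∈ σ then ⟪x, φ i - ψ i⟫ else 0 with hv
  have hv_bound : ∀ S : Finset I, ∑ i ∈ S, v i ^ 2 ≤ (lam * ‖x‖) ^ 2 := by
    intro S
    set f : I → ℝ := fun i => if i ∈ S then v i else 0 with hfdef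
    have hfsupp : ∀ i, f i ≠ 0 → i ∈ S := by
      intro i h
      by_contra hc
      simp [hfdef, hc] at h
    set a : I →₀ ℝ := Finsupp.onFinset S f hfsupp with ha
    have ha_apply : ∀ i, a i = f i := fun i => rfl
    have ha_supp : a.support ⊆ S := Finsupp.support_onFinset_subset
    set T : ℝ := ∑ i ∈ S, v i ^ 2 with hT
    have hT0 : 0 ≤ T := Finset.sum_nonneg fun i _ => sq_nonneg _
    have hsum_eq : ∑ i ∈ a.support, a i • (φ i - ψ i) = ∑ i ∈ S, f i • (φ i - ψ i) := by
      refine Finset.sum_subset ha_supp (fun i hi hni => ?_)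
      have : a i = 0 := Finsupp.notMem_support_iff.1 hni
      rw [ha_apply] at this
      rw [ha_apply, this, zero_smul]
    have hsq_eq : ∑ i ∈ a.support, (a i) ^ 2 = T := by
      rw [hT]
      rw [show (∑ i ∈ a.support, (a i) ^ 2) = ∑ i ∈ S, f i ^ 2 from
        Finset.sum_subset ha_supp (fun i hi hni => by
          have : a i = 0 := Finsupp.notMem_support_iff.1 hni
          rw [ha_apply] at this
          rw [ha_apply, this]; ring)]
      refine Finset.sum_congr rfl fun i hi => ?_
      rw [hfdef]; simp [hi]
    have hT_inner : T = ⟪x, ∑ i ∈ S, f i • (φ i - ψ i)⟫ := by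
      rw [inner_sum]
      refine Finset.sum_congr rfl fun i hi => ?_
      rw [real_inner_smul_right]
      have hfi : f i = v i := by rw [hfdef]; simp [hi]
      rw [hfi, hv]
      by_cases hiσ : i ∈ σ <;> simp [hiσ, sq]
    have hTle : T ≤ ‖x‖ * (lam * Real.sqrt T) := by
      calc T = ⟪x, ∑ i ∈ S, f i • (φ i - ψ i)⟫ := hT_inner
        _ ≤ ‖x‖ * ‖∑ i ∈ S, f i • (φ i - ψ i)‖ := real_inner_le_norm _ _
        _ ≤ ‖x‖ * (lam * Real.sqrt T) := by
            refine mul_le_mul_of_nonneg_left ?_ (norm_nonneg x)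
            rw [← hsum_eq, ← hsq_eq]
            exact hperturb a
    nlinarith [sq_nonneg (Real.sqrt T - lam * ‖x‖), Real.sq_sqrt hT0,
      Real.sqrt_nonneg T, norm_nonneg x]
  have Sv : Summable fun i => v i ^ 2 :=
    summable_of_sum_le (fun i => sq_nonneg _) hv_bound
  have hv_tsum : (∑' i, v i ^ 2) ≤ (lam * ‖x‖) ^ 2 := Summable.tsum_le_of_sum_le Sv hv_bound
  -- the σ-restricted coefficient sequences
  set uφ : I → ℝ := fun i => if i ∈ σ then F i else 0 with huφ
  set uψ : I → ℝ := fun i => if i ∈ σ then G i else 0 with huψ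
  have Suφ : Summable fun i => uφ i ^ 2 := by
    refine Summable.of_nonneg_of_le (fun i => sq_nonneg _) (fun i => ?_) Sφ
    by_cases hiσ : i ∈ σ <;> simp [huφ, hiσ, sq_nonneg]
  have Suψ : Summable fun i => uψ i ^ 2 := by
    refine Summable.of_nonneg_of_le (fun i => sq_nonneg _) (fun i => ?_) Sψ
    by_cases hiσ : i ∈ σ <;> simp [huψ, hiσ, sq_nonneg]
  have huφ_tsum : (∑' i, uφ i ^ 2) ≤ B₁ * ‖x‖ ^ 2 := by
    refine le_trans (Summable.tsum_le_tsum (fun i => ?_) Suφ Sφ) (hφ x).2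
    by_cases hiσ : i ∈ σ <;> simp [huφ, hiσ, sq_nonneg]
  have huψ_tsum : (∑' i, uψ i ^ 2) ≤ B₂ * ‖x‖ ^ 2 := by
    refine le_trans (Summable.tsum_le_tsum (fun i => ?_) Suψ Sψ) (hψ x).2
    by_cases hiσ : i ∈ σ <;> simp [huψ, hiσ, sq_nonneg]
  obtain ⟨Scross, hcross⟩ := cs_tsum Suφ Suψ
  set u : I → ℝ := fun i => uφ i + uψ i with hu
  have hu_sq : (fun i => u i ^ 2) =
      fun i => uφ i ^ 2 + (2 * (uφ i * uψ i) + uψ i ^ 2) := by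
    funext i; rw [hu]; ring
  have Su : Summable fun i => u i ^ 2 := by
    rw [hu_sq]
    exact Suφ.add (((Scross.mul_left 2)).add Suψ)
  have hu_tsum : (∑' i, u i ^ 2) =
      (∑' i, uφ i ^ 2) + (2 * (∑' i, uφ i * uψ i) + ∑' i, uψ i ^ 2) := by
    rw [hu_sq, Summable.tsum_add Suφ ((Scross.mul_left 2).add Suψ),
      Summable.tsum_add (Scross.mul_left 2) Suψ, tsum_mul_left]
  -- bound √(∑ u²) ≤ (√B₁ + √B₂)‖x‖
  set p := Real.sqrt (∑' i, uφ i ^ 2) with hp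
  set q := Real.sqrt (∑' i, uψ i ^ 2) with hq
  have hp0 : 0 ≤ p := Real.sqrt_nonneg _
  have hq0 : 0 ≤ q := Real.sqrt_nonneg _
  have hp_sq : p ^ 2 = ∑' i, uφ i ^ 2 :=
    Real.sq_sqrt (tsum_nonneg fun i => sq_nonneg _)
  have hq_sq : q ^ 2 = ∑' i, uψ i ^ 2 :=
    Real.sq_sqrt (tsum_nonneg fun i => sq_nonneg _)
  have hu_le : (∑' i, u i ^ 2) ≤ (p + q) ^ 2 := by
    rw [hu_tsum, ← hp_sq, ← hq_sq]
    nlinarith [hcross]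
  have hB₁0 : (0:ℝ) ≤ B₁ := le_of_lt (lt_of_lt_of_le hA₁ hAB₁)
  have hB₂0 : (0:ℝ) ≤ B₂ := le_of_lt (lt_of_lt_of_le hA₂ hAB₂)
  have hp_le : p ≤ Real.sqrt B₁ * ‖x‖ := by
    rw [hp]
    calc Real.sqrt (∑' i, uφ i ^ 2) ≤ Real.sqrt (B₁ * ‖x‖ ^ 2) :=
          Real.sqrt_le_sqrt huφ_tsum
      _ = Real.sqrt B₁ * ‖x‖ := by
          rw [Real.sqrt_mul hB₁0, Real.sqrt_sq (norm_nonneg x)]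
  have hq_le : q ≤ Real.sqrt B₂ * ‖x‖ := by
    rw [hq]
    calc Real.sqrt (∑' i, uψ i ^ 2) ≤ Real.sqrt (B₂ * ‖x‖ ^ 2) :=
          Real.sqrt_le_sqrt huψ_tsum
      _ = Real.sqrt B₂ * ‖x‖ := by
          rw [Real.sqrt_mul hB₂0, Real.sqrt_sq (norm_nonneg x)]
  have hsqrt_u : Real.sqrt (∑' i, u i ^ 2) ≤ (Real.sqrt B₁ + Real.sqrt B₂) * ‖x‖ := by
    calc Real.sqrt (∑' i, u i ^ 2) ≤ Real.sqrt ((p + q) ^ 2) := Real.sqrt_le_sqrt hu_le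
      _ = p + q := Real.sqrt_sq (by linarith)
      _ ≤ Real.sqrt B₁ * ‖x‖ + Real.sqrt B₂ * ‖x‖ := add_le_add hp_le hq_le
      _ = (Real.sqrt B₁ + Real.sqrt B₂) * ‖x‖ := by ring
  have hsqrt_v : Real.sqrt (∑' i, v i ^ 2) ≤ lam * ‖x‖ := by
    calc Real.sqrt (∑' i, v i ^ 2) ≤ Real.sqrt ((lam * ‖x‖) ^ 2) :=
          Real.sqrt_le_sqrt hv_tsum
      _ = lam * ‖x‖ := Real.sqrt_sq (by positivity)
  -- the main Cauchy–Schwarz estimate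
  obtain ⟨Suv, huv⟩ := cs_tsum Su Sv
  have hmain : (∑' i, u i * v i) ≤ A₁ / 2 * ‖x‖ ^ 2 := by
    have h1 : (∑' i, u i * v i) ≤
        ((Real.sqrt B₁ + Real.sqrt B₂) * ‖x‖) * (lam * ‖x‖) := by
      refine huv.trans ?_
      have hs1 : (0:ℝ) ≤ Real.sqrt (∑' i, u i ^ 2) := Real.sqrt_nonneg _
      have hs2 : (0:ℝ) ≤ Real.sqrt (∑' i, v i ^ 2) := Real.sqrt_nonneg _
      exact mul_le_mul hsqrt_u hsqrt_v hs2 (by positivity)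
    calc (∑' i, u i * v i) ≤ ((Real.sqrt B₁ + Real.sqrt B₂) * ‖x‖) * (lam * ‖x‖) := h1
      _ = (lam * (Real.sqrt B₁ + Real.sqrt B₂)) * ‖x‖ ^ 2 := by ring
      _ ≤ A₁ / 2 * ‖x‖ ^ 2 := mul_le_mul_of_nonneg_right hlam hx2.le
  -- pointwise identity F² − m = u * v
  have hdiff : ∀ i, F i ^ 2 - m i = u i * v i := by
    intro i
    simp only [hm, hu, huφ, huψ, hv, hF, hG]
    by_cases hiσ : i ∈ σ
    · simp only [hiσ, if_true, inner_sub_right]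
      ring
    · simp [hiσ]
  have hFm : (∑' i, F i ^ 2) - (∑' i, m i) = ∑' i, u i * v i := by
    rw [← Summable.tsum_sub Sφ Sm]
    exact tsum_congr hdiff
  have hlower : A₁ / 2 * ‖x‖ ^ 2 ≤ ∑' i, m i := by
    have hPA : A₁ * ‖x‖ ^ 2 ≤ ∑' i, F i ^ 2 := (hφ x).1
    have h2 := hmain
    rw [← hFm] at h2
    linarith
  exact ⟨hlower, hupper⟩
end

section
/- Let {φ_i}_{i∈I} be a frame for H with frame bounds A, B and let T : H → H be a bounded operator with ‖Id − T‖² < A/B. Then for every σ ⊆ I, the family {φ_i}_{i∈σ} ∪ {Tφ_i}_{i∈σ^c} is a frame for H with lower frame bound (√A − √B‖Id − T*‖)² > 0; in particular {φ_i} and {Tφ_i} are woven. -/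
open scoped RealInnerProductSpace BigOperators Classical

set_option maxHeartbeats 1000000

/-- If `φ` is a frame with bounds `A, B` and `T` is a bounded operator with
`‖Id − T‖² < A/B`, then every weaving `{φ_i}_{i∈σ} ∪ {Tφ_i}_{i∈σᶜ}` is a frame
with lower bound `(√A − √B‖Id − T*‖)² > 0`; in particular `{φ_i}` and `{Tφ_i}`
are woven. -/
theorem stmt_17 {H : Type*} [NormedAddCommGroup H] [InnerProductSpace ℝ H]
    [CompleteSpace H] {I : Type*} (φ : I → H) (A B : ℝ) (hA : 0 < A) (hAB : A ≤ B)
    (hφ : ∀ x : H,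
      A * ‖x‖ ^ 2 ≤ (∑' i : I, ⟪x, φ i⟫ ^ 2) ∧ (∑' i : I, ⟪x, φ i⟫ ^ 2) ≤ B * ‖x‖ ^ 2)
    (T : H →L[ℝ] H)
    (hT : ‖(ContinuousLinearMap.id ℝ H) - T‖ ^ 2 < A / B) :
    0 < (Real.sqrt A - Real.sqrt B *
        ‖(ContinuousLinearMap.id ℝ H) - ContinuousLinearMap.adjoint T‖) ^ 2 ∧
    (∀ σ : Set I, ∀ x : H,
      (Real.sqrt A - Real.sqrt B *
          ‖(ContinuousLinearMap.id ℝ H) - ContinuousLinearMap.adjoint T‖) ^ 2 * ‖x‖ ^ 2 ≤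
        ∑' i : I, ⟪x, if i ∈ σ then φ i else T (φ i)⟫ ^ 2) ∧
    (∃ B' : ℝ, 0 < B' ∧ ∀ σ : Set I, ∀ x : H,
      (∑' i : I, ⟪x, if i ∈ σ then φ i else T (φ i)⟫ ^ 2) ≤ B' * ‖x‖ ^ 2) := by
  have hB : 0 < B := lt_of_lt_of_le hA hAB
  set S : H →L[ℝ] H := (ContinuousLinearMap.id ℝ H) - ContinuousLinearMap.adjoint T with hS
  set c : ℝ := ‖S‖ with hcdef
  have hcnn : 0 ≤ c := norm_nonneg _
  -- ‖Id - T*‖ = ‖Id - T‖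
  have hceq : c = ‖(ContinuousLinearMap.id ℝ H) - T‖ := by
    have h1 : S = ContinuousLinearMap.adjoint ((ContinuousLinearMap.id ℝ H) - T) := by
      rw [map_sub, ContinuousLinearMap.adjoint_id]
    rw [hcdef, h1]
    exact LinearIsometryEquiv.norm_map ContinuousLinearMap.adjoint _
  have hc2 : c ^ 2 < A / B := by rw [hceq]; exact hT
  have hsA : Real.sqrt A > 0 := Real.sqrt_pos.mpr hA
  have hsB : Real.sqrt B > 0 := Real.sqrt_pos.mpr hB
  have hsA2 : Real.sqrt A ^ 2 = A := Real.sq_sqrt hA.le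
  have hsB2 : Real.sqrt B ^ 2 = B := Real.sq_sqrt hB.le
  -- √B * c < √A
  have hkey : Real.sqrt B * c < Real.sqrt A := by
    have hc2' : c ^ 2 * B < A := (lt_div_iff₀ hB).mp hc2
    refine lt_of_pow_lt_pow_left₀ 2 hsA.le ?_
    rw [mul_pow, hsB2, hsA2]
    nlinarith
  have hpos : 0 < Real.sqrt A - Real.sqrt B * c := by linarith
  -- summability of the frame coefficients
  have hsum : ∀ x : H, Summable (fun i : I => ⟪x, φ i⟫ ^ 2) := by
    intro x
    by_cases hx : x = 0
    · subst hx; simpa using summable_zero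
    · by_contra h
      have h0 := tsum_eq_zero_of_not_summable h
      have h1 := (hφ x).1
      rw [h0] at h1
      have : 0 < ‖x‖ := norm_pos_iff.mpr hx
      nlinarith [mul_pos hA (pow_pos this 2)]
  -- helper facts for an arbitrary σ and x
  have main : ∀ σ : Set I, ∀ x : H,
      (Real.sqrt A - Real.sqrt B * c) ^ 2 * ‖x‖ ^ 2 ≤
        (∑' i : I, ⟪x, if i ∈ σ then φ i else T (φ i)⟫ ^ 2) ∧
      (∑' i : I, ⟪x, if i ∈ σ then φ i else T (φ i)⟫ ^ 2) ≤
        2 * B * (1 + c ^ 2) * ‖x‖ ^ 2 := by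
    intro σ x
    set u : I → ℝ := fun i => ⟪x, φ i⟫ with hu_def
    set d : I → ℝ := fun i => if i ∈ σ then (0 : ℝ) else ⟪S x, φ i⟫ with hd_def
    set v : I → ℝ := fun i => ⟪x, if i ∈ σ then φ i else T (φ i)⟫ with hv_def
    have hv : ∀ i, v i = u i - d i := by
      intro i
      by_cases h : i ∈ σ
      · simp [hv_def, hu_def, hd_def, h]
      · simp only [hv_def, hu_def, hd_def, h, if_neg, if_false]
        rw [hS]
        simp only [ContinuousLinearMap.sub_apply, ContinuousLinearMap.id_apply,
          inner_sub_left, ContinuousLinearMap.adjoint_inner_left]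
        ring
    have hu : Summable (fun i => u i ^ 2) := hsum x
    have hw : Summable (fun i => ⟪S x, φ i⟫ ^ 2) := hsum (S x)
    have hd_le_pt : ∀ i, d i ^ 2 ≤ ⟪S x, φ i⟫ ^ 2 := by
      intro i
      by_cases h : i ∈ σ
      · simp [hd_def, h, sq_nonneg]
      · simp [hd_def, h]
    have hd : Summable (fun i => d i ^ 2) :=
      Summable.of_nonneg_of_le (fun i => sq_nonneg _) hd_le_pt hw
    -- ∑ d² ≤ B * c² * ‖x‖²
    have hSx : ‖S x‖ ≤ c * ‖x‖ := S.le_opNorm x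
    have hd_tsum : (∑' i, d i ^ 2) ≤ B * c ^ 2 * ‖x‖ ^ 2 := by
      have h1 : (∑' i, d i ^ 2) ≤ ∑' i, ⟪S x, φ i⟫ ^ 2 := Summable.tsum_le_tsum hd_le_pt hd hw
      have h2 := (hφ (S x)).2
      have h3 : ‖S x‖ ^ 2 ≤ c ^ 2 * ‖x‖ ^ 2 := by
        nlinarith [norm_nonneg (S x), norm_nonneg x]
      nlinarith
    have hv_pt : ∀ i, v i ^ 2 ≤ 2 * u i ^ 2 + 2 * d i ^ 2 := by
      intro i; rw [hv i]; nlinarith [sq_nonneg (u i + d i)]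
    have hv_sum : Summable (fun i => v i ^ 2) :=
      Summable.of_nonneg_of_le (fun i => sq_nonneg _) hv_pt
        (((hu.mul_left 2)).add ((hd.mul_left 2)))
    constructor
    · -- lower bound
      by_cases hc : c = 0
      · -- then S = 0 and d = 0, v = u
        have hS0 : S = 0 := norm_eq_zero.mp hc
        have hd0 : ∀ i, d i = 0 := by
          intro i; by_cases h : i ∈ σ <;> simp [hd_def, h, hS0]
        have hvu : ∀ i, v i = u i := by intro i; rw [hv i, hd0 i]; ring
        have : (∑' i, v i ^ 2) = ∑' i, u i ^ 2 := by
          exact tsum_congr fun i => by rw [hvu i]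
        rw [this, hc]
        calc (Real.sqrt A - Real.sqrt B * 0) ^ 2 * ‖x‖ ^ 2 = A * ‖x‖ ^ 2 := by
              rw [mul_zero, sub_zero, hsA2]
          _ ≤ _ := (hφ x).1
      · have hcpos : 0 < c := lt_of_le_of_ne hcnn (Ne.symm hc)
        set t : ℝ := Real.sqrt B * c / Real.sqrt A with ht_def
        have ht0 : 0 < t := div_pos (mul_pos hsB hcpos) hsA
        have ht1 : t < 1 := (div_lt_one hsA).mpr hkey
        have hinv : t * (1 / t) = 1 := mul_one_div_cancel (ne_of_gt ht0)
        have hpt : ∀ i, (1 - t) * u i ^ 2 + (1 - 1 / t) * d i ^ 2 ≤ v i ^ 2 := by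
          intro i
          rw [hv i]
          have expand : (u i - d i) ^ 2 - (1 - t) * u i ^ 2 - (1 - 1 / t) * d i ^ 2
              = (t * u i - d i) ^ 2 / t := by
            field_simp
            ring
          have h1 : 0 ≤ (t * u i - d i) ^ 2 / t := div_nonneg (sq_nonneg _) ht0.le
          linarith
        have hlhs_sum : Summable (fun i => (1 - t) * u i ^ 2 + (1 - 1 / t) * d i ^ 2) :=
          (hu.mul_left _).add (hd.mul_left _)
        have h1 : (∑' i, ((1 - t) * u i ^ 2 + (1 - 1 / t) * d i ^ 2)) ≤ ∑' i, v i ^ 2 :=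
          Summable.tsum_le_tsum hpt hlhs_sum hv_sum
        have h2 : (∑' i, ((1 - t) * u i ^ 2 + (1 - 1 / t) * d i ^ 2))
            = (1 - t) * (∑' i, u i ^ 2) + (1 - 1 / t) * (∑' i, d i ^ 2) := by
          rw [Summable.tsum_add (hu.mul_left _) (hd.mul_left _), tsum_mul_left, tsum_mul_left]
        have h3 : (1 - t) * (A * ‖x‖ ^ 2) ≤ (1 - t) * (∑' i, u i ^ 2) :=
          mul_le_mul_of_nonneg_left (hφ x).1 (by linarith)
        have h4 : (1 - 1 / t) * (B * c ^ 2 * ‖x‖ ^ 2) ≤ (1 - 1 / t) * (∑' i, d i ^ 2) := by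
          apply mul_le_mul_of_nonpos_left hd_tsum
          have : 1 < 1 / t := (lt_div_iff₀ ht0).mpr (by linarith)
          linarith
        have hfinal : (Real.sqrt A - Real.sqrt B * c) ^ 2 * ‖x‖ ^ 2
            = (1 - t) * (A * ‖x‖ ^ 2) + (1 - 1 / t) * (B * c ^ 2 * ‖x‖ ^ 2) := by
          have h5 : t * Real.sqrt A = Real.sqrt B * c := by
            rw [ht_def]; field_simp
          have h6 : (1 / t) * (Real.sqrt B * c) = Real.sqrt A := by
            rw [ht_def]
            field_simp
          linear_combination ((1 - t) * ‖x‖ ^ 2) * hsA2 +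
            ((1 - 1 / t) * c ^ 2 * ‖x‖ ^ 2) * hsB2 +
            (Real.sqrt A * ‖x‖ ^ 2) * h5 + (Real.sqrt B * c * ‖x‖ ^ 2) * h6
        linarith
    · -- upper bound
      have h1 : (∑' i, v i ^ 2) ≤ ∑' i, (2 * u i ^ 2 + 2 * d i ^ 2) :=
        Summable.tsum_le_tsum hv_pt hv_sum ((hu.mul_left 2).add (hd.mul_left 2))
      have h2 : (∑' i, (2 * u i ^ 2 + 2 * d i ^ 2))
          = 2 * (∑' i, u i ^ 2) + 2 * (∑' i, d i ^ 2) := by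
        rw [Summable.tsum_add (hu.mul_left 2) (hd.mul_left 2), tsum_mul_left, tsum_mul_left]
      have h3 := (hφ x).2
      nlinarith [hd_tsum]
  refine ⟨pow_pos hpos 2, fun σ x => (main σ x).1,
    ⟨2 * B * (1 + c ^ 2), by nlinarith, fun σ x => (main σ x).2⟩⟩
end

section
/- Let Φ = {φ_i}_{i∈I} be a frame for H with frame bounds A, B and frame operator S (Sx = ∑_i ⟨x,φ_i⟩φ_i). If B/A < 2, then Φ and the scaled canonical dual frame Ψ = {(2AB/(A+B)) S⁻¹ φ_i}_{i∈I} are woven, i.e., for every σ ⊆ I the family {φ_i}_{i∈σ} ∪ {(2AB/(A+B))S⁻¹φ_i}_{i∈σ^c} is a frame with uniform bounds. -/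
open scoped RealInnerProductSpace BigOperators Classical

set_option maxHeartbeats 2000000 in
/-- If `Φ` is a frame with bounds `A, B`, frame operator `S`, and condition number
`B/A < 2`, then `Φ` and the scaled canonical dual frame
`{(2AB/(A+B)) S⁻¹ φ_i}` are woven. -/
theorem stmt_18 {H : Type*} [NormedAddCommGroup H] [InnerProductSpace ℝ H]
    [CompleteSpace H] {I : Type*} (φ : I → H) (A B : ℝ) (hA : 0 < A) (hAB : A ≤ B)
    (hφ : ∀ x : H,
      A * ‖x‖ ^ 2 ≤ (∑' i : I, ⟪x, φ i⟫ ^ 2) ∧ (∑' i : I, ⟪x, φ i⟫ ^ 2) ≤ B * ‖x‖ ^ 2)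
    (S Sinv : H →L[ℝ] H)
    (hS : ∀ x : H, S x = ∑' i : I, ⟪x, φ i⟫ • φ i)
    (hS₁ : S.comp Sinv = ContinuousLinearMap.id ℝ H)
    (hS₂ : Sinv.comp S = ContinuousLinearMap.id ℝ H)
    (hcond : B / A < 2) :
    ∃ C D : ℝ, 0 < C ∧ C ≤ D ∧ ∀ σ : Set I, ∀ x : H,
      C * ‖x‖ ^ 2 ≤
        (∑' i : I, ⟪x, if i ∈ σ then φ i else (2 * A * B / (A + B)) • Sinv (φ i)⟫ ^ 2) ∧
      (∑' i : I, ⟪x, if i ∈ σ then φ i else (2 * A * B / (A + B)) • Sinv (φ i)⟫ ^ 2) ≤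
        D * ‖x‖ ^ 2 := by
  have hB : 0 < B := lt_of_lt_of_le hA hAB
  -- Step 1: summability of squares
  have hsq : ∀ x : H, Summable (fun i => ⟪x, φ i⟫ ^ 2) := by
    intro x
    by_contra hns
    have h0 := (hφ x).1
    rw [tsum_eq_zero_of_not_summable hns] at h0
    have hx : x = 0 := by
      have h1 : ‖x‖ ^ 2 ≤ 0 := by nlinarith
      have h2 : ‖x‖ = 0 := by nlinarith [sq_nonneg ‖x‖, norm_nonneg x]
      exact norm_eq_zero.mp h2
    exact hns (by simpa [hx] using summable_zero)
  -- Step 2: finite sums bounded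
  have hfinB : ∀ (x : H) (t : Finset I), ∑ i ∈ t, ⟪x, φ i⟫ ^ 2 ≤ B * ‖x‖ ^ 2 :=
    fun x t => le_trans (Summable.sum_le_tsum t (fun i _ => sq_nonneg _) (hsq x)) (hφ x).2
  -- Step 3: norm of finite partial sums
  have hw : ∀ (t : Finset I) (x : H),
      ‖∑ i ∈ t, ⟪x, φ i⟫ • φ i‖ ^ 2 ≤ B * ∑ i ∈ t, ⟪x, φ i⟫ ^ 2 := by
    intro t x
    set w := ∑ i ∈ t, ⟪x, φ i⟫ • φ i with hwdef
    have h1 : ‖w‖ ^ 2 = ∑ i ∈ t, ⟪x, φ i⟫ * ⟪w, φ i⟫ := by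
      rw [← real_inner_self_eq_norm_sq]
      rw [hwdef, sum_inner]
      refine Finset.sum_congr rfl fun i _ => ?_
      rw [real_inner_smul_left, real_inner_comm (φ i) w]
    have h2 := Finset.sum_mul_sq_le_sq_mul_sq t (fun i => ⟪x, φ i⟫) (fun i => ⟪w, φ i⟫)
    have h3 := hfinB w t
    have hnn : (0:ℝ) ≤ ‖w‖ ^ 2 := sq_nonneg _
    rcases hnn.eq_or_lt with h | h
    · rw [← h]
      have : (0:ℝ) ≤ ∑ i ∈ t, ⟪x, φ i⟫ ^ 2 := Finset.sum_nonneg fun i _ => sq_nonneg _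
      positivity
    · have h4 : (‖w‖ ^ 2) * (‖w‖ ^ 2) ≤ (B * ∑ i ∈ t, ⟪x, φ i⟫ ^ 2) * ‖w‖ ^ 2 := by
        nlinarith [Finset.sum_nonneg (fun i (_ : i ∈ t) => sq_nonneg ⟪x, φ i⟫)]
      exact le_of_mul_le_mul_right h4 h
  -- Step 4: summability of the vector family
  have hsumv : ∀ x : H, Summable (fun i => ⟪x, φ i⟫ • φ i) := by
    intro x
    rw [summable_iff_vanishing]
    intro e he
    rcases Metric.mem_nhds_iff.mp he with ⟨ε, hε, hball⟩
    have hεB : (0:ℝ) < ε ^ 2 / B := by positivity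
    have := (summable_iff_vanishing.mp (hsq x)) (Metric.ball 0 (ε ^ 2 / B))
      (Metric.ball_mem_nhds 0 hεB)
    rcases this with ⟨s, hs⟩
    refine ⟨s, fun t ht => ?_⟩
    apply hball
    have h1 := hs t ht
    rw [Metric.mem_ball, dist_zero_right, Real.norm_eq_abs] at h1
    have h2 : ∑ i ∈ t, ⟪x, φ i⟫ ^ 2 < ε ^ 2 / B := lt_of_le_of_lt (le_abs_self _) h1
    have h3 := hw t x
    rw [Metric.mem_ball, dist_zero_right]
    have h4 : ‖∑ i ∈ t, ⟪x, φ i⟫ • φ i‖ ^ 2 < ε ^ 2 := by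
      calc ‖∑ i ∈ t, ⟪x, φ i⟫ • φ i‖ ^ 2 ≤ B * ∑ i ∈ t, ⟪x, φ i⟫ ^ 2 := h3
        _ < B * (ε ^ 2 / B) := by exact (mul_lt_mul_iff_right₀ hB).mpr h2
        _ = ε ^ 2 := by field_simp
    nlinarith [norm_nonneg (∑ i ∈ t, ⟪x, φ i⟫ • φ i)]
  -- Step 5-6
  have hhs : ∀ x : H, HasSum (fun i => ⟪x, φ i⟫ • φ i) (S x) := by
    intro x
    rw [hS x]
    exact (hsumv x).hasSum
  have hinner : ∀ x y : H, HasSum (fun i => ⟪x, φ i⟫ * ⟪y, φ i⟫) ⟪y, S x⟫ := by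
    intro x y
    have h := ContinuousLinearMap.hasSum (innerSL ℝ y) (hhs x)
    simpa [innerSL_apply_apply, inner_smul_right, mul_comm] using h
  -- Step 7
  have hq : ∀ x : H, ⟪x, S x⟫ = ∑' i, ⟪x, φ i⟫ ^ 2 := by
    intro x
    have h := (hinner x x).tsum_eq
    rw [← h]
    exact tsum_congr fun i => (sq ⟪x, φ i⟫).symm ▸ by ring
  -- Step 8
  have hsym : ∀ x y : H, ⟪y, S x⟫ = ⟪x, S y⟫ := by
    intro x y
    exact (hinner x y).unique (by simpa [mul_comm] using hinner y x)
  -- Step 9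
  have hSid : ∀ x : H, S (Sinv x) = x := fun x => by
    have := ContinuousLinearMap.ext_iff.mp hS₁ x
    simpa using this
  have hSinvsym : ∀ x y : H, ⟪x, Sinv y⟫ = ⟪Sinv x, y⟫ := by
    intro x y
    calc ⟪x, Sinv y⟫ = ⟪S (Sinv x), Sinv y⟫ := by rw [hSid]
      _ = ⟪Sinv y, S (Sinv x)⟫ := real_inner_comm _ _
      _ = ⟪Sinv x, S (Sinv y)⟫ := hsym _ _
      _ = ⟪Sinv x, y⟫ := by rw [hSid]
  -- Step 10: pointwise norm bound for R = S - m Id via polarization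
  set m : ℝ := (A + B) / 2 with hm
  set ρ : ℝ := (B - A) / 2 with hρ
  have hρ0 : 0 ≤ ρ := by simp [hρ]; linarith
  set R : H →L[ℝ] H := S - m • ContinuousLinearMap.id ℝ H with hRdef
  have hRapp : ∀ v : H, R v = S v - m • v := fun v => by
    simp [hRdef, ContinuousLinearMap.sub_apply, ContinuousLinearMap.smul_apply]
  have hRsym : ∀ v w : H, ⟪R v, w⟫ = ⟪R w, v⟫ := by
    intro v w
    have h1 : ⟪S v, w⟫ = ⟪S w, v⟫ := by
      rw [real_inner_comm w (S v)]
      rw [real_inner_comm v (S w)]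
      exact hsym v w
    rw [hRapp, hRapp, inner_sub_left, inner_sub_left, real_inner_smul_left,
      real_inner_smul_left, h1, real_inner_comm w v]
  have hRdiag : ∀ v : H, |⟪R v, v⟫| ≤ ρ * ‖v‖ ^ 2 := by
    intro v
    have h1 : ⟪R v, v⟫ = ⟪v, S v⟫ - m * ‖v‖ ^ 2 := by
      rw [hRapp, inner_sub_left, real_inner_smul_left, real_inner_self_eq_norm_sq,
        real_inner_comm]
    have h2 : A * ‖v‖ ^ 2 ≤ ⟪v, S v⟫ := by rw [hq]; exact (hφ v).1
    have h3 : ⟪v, S v⟫ ≤ B * ‖v‖ ^ 2 := by rw [hq]; exact (hφ v).2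
    rw [abs_le]
    constructor <;> [skip; skip] <;> rw [h1] <;> simp only [hm, hρ] <;> nlinarith
  have hR : ∀ v : H, ‖R v‖ ≤ ρ * ‖v‖ := by
    intro v
    by_cases hz : R v = 0
    · rw [hz]; simp; positivity
    · have hRv : 0 < ‖R v‖ := norm_pos_iff.mpr hz
      have hv : 0 < ‖v‖ := by
        rcases eq_or_ne v 0 with h | h
        · exfalso; apply hz; rw [h]; exact map_zero R
        · exact norm_pos_iff.mpr h
      set w : H := (‖v‖ / ‖R v‖) • R v with hwdef
      have hww : ‖w‖ = ‖v‖ := by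
        rw [hwdef, norm_smul, Real.norm_eq_abs, abs_div, abs_of_nonneg (norm_nonneg v),
          abs_of_nonneg (norm_nonneg (R v)), div_mul_cancel₀]
        exact ne_of_gt hRv
      have hvw : ⟪R v, w⟫ = ‖v‖ * ‖R v‖ := by
        rw [hwdef, real_inner_smul_right, real_inner_self_eq_norm_sq]
        field_simp
      have expand : ⟪R (v + w), v + w⟫ - ⟪R (v - w), v - w⟫ = 4 * ⟪R v, w⟫ := by
        simp only [map_add, map_sub, inner_add_left, inner_add_right, inner_sub_left,
          inner_sub_right]
        rw [hRsym w v]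
        ring
      have hplus := (abs_le.mp (hRdiag (v + w))).2
      have hminus := (abs_le.mp (hRdiag (v - w))).1
      have hpar : ‖v + w‖ ^ 2 + ‖v - w‖ ^ 2 = 2 * ‖v‖ ^ 2 + 2 * ‖w‖ ^ 2 := by
        rw [norm_add_sq_real, norm_sub_sq_real]; ring
      have hww2 : ‖w‖ ^ 2 = ‖v‖ ^ 2 := by rw [hww]
      have hsum : ⟪R (v + w), v + w⟫ - ⟪R (v - w), v - w⟫ ≤ ρ * ‖v + w‖ ^ 2 + ρ * ‖v - w‖ ^ 2 := by
        linarith [hplus, hminus]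
      have h5 : ρ * ‖v + w‖ ^ 2 + ρ * ‖v - w‖ ^ 2 = 4 * (ρ * ‖v‖ ^ 2) := by
        linear_combination ρ * hpar + 2 * ρ * hww2
      have key : 4 * (‖v‖ * ‖R v‖) ≤ 4 * (ρ * ‖v‖ ^ 2) := by
        rw [← hvw]; linarith [expand, hsum, h5]
      have h6 : ‖v‖ * ‖R v‖ ≤ ‖v‖ * (ρ * ‖v‖) := by nlinarith
      exact le_of_mul_le_mul_left h6 hv
  -- Step 11: the key pointwise contraction bound
  have hT : (0:ℝ) < A + B := by linarith
  have hT2 : (0:ℝ) < (A + B) ^ 2 := by positivity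
  set c : ℝ := 2 * A * B / (A + B) with hcdef
  set r : ℝ := (B - A) / (A + B) with hrdef
  have hr0 : 0 ≤ r := by apply div_nonneg <;> linarith
  have hcT : c * (A + B) = 2 * A * B := by rw [hcdef, div_mul_cancel₀ _ (ne_of_gt hT)]
  have hrT : r * (A + B) = B - A := by rw [hrdef, div_mul_cancel₀ _ (ne_of_gt hT)]
  have hkey : ∀ x : H, ‖x - c • Sinv x‖ ≤ r * ‖x‖ := by
    intro x
    have hxu : x = S (Sinv x) := (hSid x).symm
    set u := Sinv x with hu
    rw [hxu]
    have h8 : ‖R u‖ ^ 2 ≤ ρ ^ 2 * ‖u‖ ^ 2 := by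
      have h7 := hR u
      nlinarith [norm_nonneg (R u), norm_nonneg u, hρ0]
    have h9 : ‖R u‖ ^ 2 = ‖S u‖ ^ 2 - 2 * (m * ⟪S u, u⟫) + m ^ 2 * ‖u‖ ^ 2 := by
      rw [hRapp u, norm_sub_sq_real, real_inner_smul_right, norm_smul, Real.norm_eq_abs,
        mul_pow, sq_abs]
    have hqb1 : A * ‖u‖ ^ 2 ≤ ⟪S u, u⟫ := by
      rw [real_inner_comm u (S u), hq u]; exact (hφ u).1
    have hqb2 : ⟪S u, u⟫ ≤ B * ‖u‖ ^ 2 := by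
      rw [real_inner_comm u (S u), hq u]; exact (hφ u).2
    have hm2 : ‖S u‖ ^ 2 ≤ (A + B) * ⟪S u, u⟫ - A * B * ‖u‖ ^ 2 := by
      rw [h9] at h8
      rw [hm, hρ] at h8
      ring_nf at h8 ⊢
      linarith [h8]
    have hexp : ‖S u - c • u‖ ^ 2 = ‖S u‖ ^ 2 - 2 * (c * ⟪S u, u⟫) + c ^ 2 * ‖u‖ ^ 2 := by
      rw [norm_sub_sq_real, real_inner_smul_right, norm_smul, Real.norm_eq_abs, mul_pow, sq_abs]
    have hsq2 : ‖S u - c • u‖ ^ 2 ≤ (r * ‖S u‖) ^ 2 := by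
      rw [hexp]
      apply le_of_mul_le_mul_right ?_ hT2
      have exp1 : (‖S u‖ ^ 2 - 2 * (c * ⟪S u, u⟫) + c ^ 2 * ‖u‖ ^ 2) * (A + B) ^ 2
          = (A + B) ^ 2 * ‖S u‖ ^ 2 - 4 * A * B * ((A + B) * ⟪S u, u⟫)
            + 4 * A ^ 2 * B ^ 2 * ‖u‖ ^ 2 := by
        linear_combination (‖u‖ ^ 2 * (c * (A + B) + 2 * A * B)
          - 2 * ⟪S u, u⟫ * (A + B)) * hcT
      have exp2 : (r * ‖S u‖) ^ 2 * (A + B) ^ 2 = (B - A) ^ 2 * ‖S u‖ ^ 2 := by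
        linear_combination (‖S u‖ ^ 2 * (r * (A + B) + (B - A))) * hrT
      rw [exp1, exp2]
      have hint := mul_le_mul_of_nonneg_left hm2 (by positivity : (0:ℝ) ≤ 4 * A * B)
      ring_nf at hint ⊢
      linarith [hint]
    calc ‖S u - c • u‖ = Real.sqrt (‖S u - c • u‖ ^ 2) := (Real.sqrt_sq (norm_nonneg _)).symm
      _ ≤ Real.sqrt ((r * ‖S u‖) ^ 2) := Real.sqrt_le_sqrt hsq2
      _ = r * ‖S u‖ := Real.sqrt_sq (by positivity)
  -- Step 12: constants
  have hBlt : B < 2 * A := by rwa [div_lt_iff₀ hA] at hcond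
  have hrA : Real.sqrt B * r < Real.sqrt A := by
    have h1 : B * r ^ 2 < A := by
      have h2 : B * r ^ 2 = B * (B - A) ^ 2 / (A + B) ^ 2 := by
        rw [hrdef, div_pow]; ring
      rw [h2, div_lt_iff₀ hT2]
      nlinarith [mul_lt_mul_of_pos_right hBlt (mul_pos hB hB),
        mul_pos (mul_pos hA hA) hA, mul_pos (mul_pos hA hA) hB, mul_pos (mul_pos hA hB) hB]
    have h3 : Real.sqrt (B * r ^ 2) < Real.sqrt A := by
      exact Real.sqrt_lt_sqrt (by positivity) h1
    rwa [Real.sqrt_mul (le_of_lt hB), Real.sqrt_sq hr0] at h3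
  set C : ℝ := (Real.sqrt A - Real.sqrt B * r) ^ 2 with hCdef
  set D : ℝ := B * (1 + (1 + r) ^ 2) with hDdef
  have hsA : (0:ℝ) < Real.sqrt A - Real.sqrt B * r := sub_pos.mpr hrA
  have hC : 0 < C := pow_pos hsA 2
  have hCD : C ≤ D := by
    have h1 : C ≤ A := by
      have h2 : Real.sqrt A - Real.sqrt B * r ≤ Real.sqrt A := by
        nlinarith [Real.sqrt_nonneg B, hr0, mul_nonneg (Real.sqrt_nonneg B) hr0]
      calc C ≤ (Real.sqrt A) ^ 2 := pow_le_pow_left₀ (le_of_lt hsA) h2 2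
        _ = A := Real.sq_sqrt (le_of_lt hA)
    have h3 : B ≤ D := by rw [hDdef]; nlinarith [sq_nonneg (1 + r)]
    linarith
  -- Step 13: main assembly
  refine ⟨C, D, hC, hCD, fun σ x => ?_⟩
  set z : H := c • Sinv x with hz
  set y : H := x - c • Sinv x with hy
  have hyn : ‖y‖ ≤ r * ‖x‖ := hkey x
  set f : I → ℝ := fun i => ⟪x, if i ∈ σ then φ i else c • Sinv (φ i)⟫ with hf
  set d : I → ℝ := fun i => if i ∈ σ then 0 else ⟪y, φ i⟫ with hd
  have hgoal : (∑' i, ⟪x, if i ∈ σ then φ i else c • Sinv (φ i)⟫ ^ 2) = ∑' i, f i ^ 2 := rfl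
  have hfz : ∀ i, i ∉ σ → f i = ⟪z, φ i⟫ := by
    intro i hiσ
    simp only [hf, if_neg hiσ, hz]
    rw [real_inner_smul_right, real_inner_smul_left, hSinvsym x (φ i)]
  have hfd : ∀ i, f i = ⟪x, φ i⟫ - d i := by
    intro i
    by_cases hiσ : i ∈ σ
    · simp [hf, hd, hiσ]
    · rw [hfz i hiσ]
      simp only [hd, if_neg hiσ, hy]
      rw [inner_sub_left]
      ring
  have hub : ∀ i, f i ^ 2 ≤ ⟪x, φ i⟫ ^ 2 + ⟪z, φ i⟫ ^ 2 := by
    intro i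
    by_cases hiσ : i ∈ σ
    · simp only [hf, if_pos hiσ]
      nlinarith [sq_nonneg ⟪z, φ i⟫]
    · rw [hfz i hiσ]
      nlinarith [sq_nonneg ⟪x, φ i⟫]
  have hdb : ∀ i, d i ^ 2 ≤ ⟪y, φ i⟫ ^ 2 := by
    intro i
    by_cases hiσ : i ∈ σ <;> simp [hd, hiσ] <;> positivity
  have hsd : Summable (fun i => d i ^ 2) :=
    Summable.of_nonneg_of_le (fun i => sq_nonneg _) hdb (hsq y)
  have hsf : Summable (fun i => f i ^ 2) :=
    Summable.of_nonneg_of_le (fun i => sq_nonneg _) hub ((hsq x).add (hsq z))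
  constructor
  · -- lower bound
    rw [hgoal]
    have hM : A * ‖x‖ ^ 2 ≤ ∑' i, ⟪x, φ i⟫ ^ 2 := (hφ x).1
    have hL0 : (0:ℝ) ≤ ∑' i, f i ^ 2 := tsum_nonneg fun i => sq_nonneg _
    have hN0 : (0:ℝ) ≤ ∑' i, d i ^ 2 := tsum_nonneg fun i => sq_nonneg _
    -- Minkowski via finset sums
    have hMink : (∑' i, ⟪x, φ i⟫ ^ 2)
        ≤ (Real.sqrt (∑' i, f i ^ 2) + Real.sqrt (∑' i, d i ^ 2)) ^ 2 := by
      apply Summable.tsum_le_of_sum_le (hsq x)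
      intro t
      have hP0 : (0:ℝ) ≤ ∑ i ∈ t, f i ^ 2 := Finset.sum_nonneg fun i _ => sq_nonneg _
      have hQ0 : (0:ℝ) ≤ ∑ i ∈ t, d i ^ 2 := Finset.sum_nonneg fun i _ => sq_nonneg _
      have hCS := Finset.sum_mul_sq_le_sq_mul_sq t f d
      have h1 : ∑ i ∈ t, f i * d i
          ≤ Real.sqrt (∑ i ∈ t, f i ^ 2) * Real.sqrt (∑ i ∈ t, d i ^ 2) := by
        calc ∑ i ∈ t, f i * d i ≤ |∑ i ∈ t, f i * d i| := le_abs_self _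
          _ = Real.sqrt ((∑ i ∈ t, f i * d i) ^ 2) := (Real.sqrt_sq_eq_abs _).symm
          _ ≤ Real.sqrt ((∑ i ∈ t, f i ^ 2) * (∑ i ∈ t, d i ^ 2)) := Real.sqrt_le_sqrt hCS
          _ = _ := Real.sqrt_mul hP0 _
      have h2 : ∑ i ∈ t, ⟪x, φ i⟫ ^ 2
          = (∑ i ∈ t, f i ^ 2) + 2 * (∑ i ∈ t, f i * d i) + ∑ i ∈ t, d i ^ 2 := by
        rw [Finset.mul_sum, ← Finset.sum_add_distrib, ← Finset.sum_add_distrib]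
        refine Finset.sum_congr rfl fun i _ => ?_
        rw [show ⟪x, φ i⟫ = f i + d i from by rw [hfd i]; ring]
        ring
      have h3 : (Real.sqrt (∑ i ∈ t, f i ^ 2) + Real.sqrt (∑ i ∈ t, d i ^ 2)) ^ 2
          = (∑ i ∈ t, f i ^ 2)
            + 2 * (Real.sqrt (∑ i ∈ t, f i ^ 2) * Real.sqrt (∑ i ∈ t, d i ^ 2))
            + ∑ i ∈ t, d i ^ 2 := by
        rw [add_sq, Real.sq_sqrt hP0, Real.sq_sqrt hQ0]; ring
      have h4 : (∑ i ∈ t, ⟪x, φ i⟫ ^ 2)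
          ≤ (Real.sqrt (∑ i ∈ t, f i ^ 2) + Real.sqrt (∑ i ∈ t, d i ^ 2)) ^ 2 := by
        rw [h2, h3]; linarith
      refine le_trans h4 ?_
      have h5 : Real.sqrt (∑ i ∈ t, f i ^ 2) ≤ Real.sqrt (∑' i, f i ^ 2) :=
        Real.sqrt_le_sqrt (Summable.sum_le_tsum t (fun i _ => sq_nonneg _) hsf)
      have h6 : Real.sqrt (∑ i ∈ t, d i ^ 2) ≤ Real.sqrt (∑' i, d i ^ 2) :=
        Real.sqrt_le_sqrt (Summable.sum_le_tsum t (fun i _ => sq_nonneg _) hsd)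
      apply pow_le_pow_left₀ (by positivity) (by linarith) 2
    have hNle : (∑' i, d i ^ 2) ≤ B * (r * ‖x‖) ^ 2 := by
      calc (∑' i, d i ^ 2) ≤ ∑' i, ⟪y, φ i⟫ ^ 2 := Summable.tsum_le_tsum hdb hsd (hsq y)
        _ ≤ B * ‖y‖ ^ 2 := (hφ y).2
        _ ≤ B * (r * ‖x‖) ^ 2 := by
            have := pow_le_pow_left₀ (norm_nonneg y) hyn 2
            nlinarith
    have hsqN : Real.sqrt (∑' i, d i ^ 2) ≤ Real.sqrt B * (r * ‖x‖) := by
      calc Real.sqrt (∑' i, d i ^ 2) ≤ Real.sqrt (B * (r * ‖x‖) ^ 2) := Real.sqrt_le_sqrt hNle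
        _ = Real.sqrt B * (r * ‖x‖) := by
            rw [Real.sqrt_mul (le_of_lt hB), Real.sqrt_sq (by positivity)]
    have hsqM : Real.sqrt A * ‖x‖ ≤ Real.sqrt (∑' i, ⟪x, φ i⟫ ^ 2) := by
      have h7 : Real.sqrt (A * ‖x‖ ^ 2) ≤ Real.sqrt (∑' i, ⟪x, φ i⟫ ^ 2) :=
        Real.sqrt_le_sqrt hM
      rwa [Real.sqrt_mul (le_of_lt hA), Real.sqrt_sq (norm_nonneg x)] at h7
    have hsqMink : Real.sqrt (∑' i, ⟪x, φ i⟫ ^ 2)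
        ≤ Real.sqrt (∑' i, f i ^ 2) + Real.sqrt (∑' i, d i ^ 2) := by
      have h8 := Real.sqrt_le_sqrt hMink
      rwa [Real.sqrt_sq (by positivity)] at h8
    have hLlb : (Real.sqrt A - Real.sqrt B * r) * ‖x‖ ≤ Real.sqrt (∑' i, f i ^ 2) := by
      nlinarith [hsqM, hsqMink, hsqN]
    calc C * ‖x‖ ^ 2 = ((Real.sqrt A - Real.sqrt B * r) * ‖x‖) ^ 2 := by rw [hCdef]; ring
      _ ≤ (Real.sqrt (∑' i, f i ^ 2)) ^ 2 :=
          pow_le_pow_left₀ (mul_nonneg (le_of_lt hsA) (norm_nonneg x)) hLlb 2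
      _ = ∑' i, f i ^ 2 := Real.sq_sqrt hL0
  · -- upper bound
    rw [hgoal]
    have h9 : (∑' i, f i ^ 2) ≤ ∑' i, (⟪x, φ i⟫ ^ 2 + ⟪z, φ i⟫ ^ 2) :=
      Summable.tsum_le_tsum hub hsf ((hsq x).add (hsq z))
    have h10 : (∑' i, (⟪x, φ i⟫ ^ 2 + ⟪z, φ i⟫ ^ 2))
        = (∑' i, ⟪x, φ i⟫ ^ 2) + ∑' i, ⟪z, φ i⟫ ^ 2 := Summable.tsum_add (hsq x) (hsq z)
    have hzn : ‖z‖ ≤ (1 + r) * ‖x‖ := by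
      have : z = x - y := by rw [hz, hy, sub_sub_cancel]
      rw [this]
      calc ‖x - y‖ ≤ ‖x‖ + ‖y‖ := norm_sub_le x y
        _ ≤ (1 + r) * ‖x‖ := by linarith
    have h11 : (∑' i, ⟪z, φ i⟫ ^ 2) ≤ B * ((1 + r) * ‖x‖) ^ 2 := by
      refine le_trans (hφ z).2 ?_
      have := pow_le_pow_left₀ (norm_nonneg z) hzn 2
      nlinarith
    calc (∑' i, f i ^ 2) ≤ (∑' i, ⟪x, φ i⟫ ^ 2) + ∑' i, ⟪z, φ i⟫ ^ 2 := by
          rw [← h10]; exact h9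
      _ ≤ B * ‖x‖ ^ 2 + B * ((1 + r) * ‖x‖) ^ 2 := add_le_add (hφ x).2 h11
      _ = D * ‖x‖ ^ 2 := by rw [hDdef]; ring
end

section
/- Let {e_k}_{k=1}^∞ be an orthonormal basis for H and {φ_ℓ}_{ℓ=1}^∞ a Riesz basis for H. Write the cross Gramian A = (⟨φ_ℓ, e_k⟩)_{k,ℓ} = D + R, where D is the diagonal part. If inf_k |D_{kk}| ≥ λ > 0 and ‖R‖ ≤ λ/2 (operator norm on ℓ²), then for every σ ⊆ ℕ, the family {e_k}_{k∈σ} ∪ {φ_ℓ}_{ℓ∈σ^c} is a Riesz sequence with lower Riesz bound min(1,λ²)/4; consequently {e_k} and {φ_ℓ} are woven. -/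
open scoped RealInnerProductSpace BigOperators Classical
set_option maxHeartbeats 1000000

lemma l2_summable_sq (F : lp (fun _ : ℕ => ℝ) 2) : Summable (fun k => F k ^ 2) := by
  have := lp.summable_inner (𝕜 := ℝ) F F
  simpa [RCLike.inner_apply, sq] using this

lemma l2_norm_sq (F : lp (fun _ : ℕ => ℝ) 2) : ‖F‖ ^ 2 = ∑' k, F k ^ 2 := by
  rw [← real_inner_self_eq_norm_sq, lp.inner_eq_tsum]
  simp [RCLike.inner_apply, sq]

/-- Diagonal dominance of the cross Gramian: if `{e_k}` is an orthonormal basis,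
`{φ_ℓ}` is a Riesz basis, the diagonal entries of the cross Gramian satisfy
`|⟪φ_k, e_k⟫| ≥ λ > 0` and the off-diagonal part `R` has operator norm
`‖R‖ ≤ λ/2` on `ℓ²`, then every weaving `{e_k}_{k∈σ} ∪ {φ_ℓ}_{ℓ∈σᶜ}` is a Riesz
sequence with lower Riesz bound `min(1, λ²)/4`; consequently `{e_k}` and `{φ_ℓ}`
are woven. -/
theorem stmt_19 {H : Type*} [NormedAddCommGroup H] [InnerProductSpace ℝ H]
    [CompleteSpace H] (e φ : ℕ → H)
    (he : Orthonormal ℝ e)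
    (hedense : Dense (Submodule.span ℝ (Set.range e) : Set H))
    (hφ : ∃ A B : ℝ, 0 < A ∧ A ≤ B ∧ ∀ c : ℕ →₀ ℝ,
      A * (∑ i ∈ c.support, (c i) ^ 2) ≤ ‖∑ i ∈ c.support, c i • φ i‖ ^ 2 ∧
      ‖∑ i ∈ c.support, c i • φ i‖ ^ 2 ≤ B * (∑ i ∈ c.support, (c i) ^ 2))
    (hφdense : Dense (Submodule.span ℝ (Set.range φ) : Set H))
    (lam : ℝ) (hlam : 0 < lam)
    (hdiag : ∀ k : ℕ, lam ≤ |⟪φ k, e k⟫|)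
    (R : lp (fun _ : ℕ => ℝ) 2 →L[ℝ] lp (fun _ : ℕ => ℝ) 2)
    (hR : ∀ (a : lp (fun _ : ℕ => ℝ) 2) (k : ℕ),
      R a k = ∑' ℓ : ℕ, (if k = ℓ then 0 else ⟪φ ℓ, e k⟫) * a ℓ)
    (hRnorm : ‖R‖ ≤ lam / 2) :
    (∀ σ : Set ℕ, ∀ c : ℕ →₀ ℝ,
      min 1 (lam ^ 2) / 4 * (∑ i ∈ c.support, (c i) ^ 2) ≤
        ‖∑ i ∈ c.support, c i • (if i ∈ σ then e i else φ i)‖ ^ 2) ∧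
    (∃ A B : ℝ, 0 < A ∧ A ≤ B ∧ ∀ σ : Set ℕ, ∀ x : H,
      A * ‖x‖ ^ 2 ≤ (∑' i : ℕ, ⟪x, if i ∈ σ then e i else φ i⟫ ^ 2) ∧
      (∑' i : ℕ, ⟪x, if i ∈ σ then e i else φ i⟫ ^ 2) ≤ B * ‖x‖ ^ 2) := by
  obtain ⟨Aφ, Bφ, hAφ, hABφ, hφb⟩ := hφ
  have hsp : ⊤ ≤ (Submodule.span ℝ (Set.range e)).topologicalClosure :=
    le_of_eq (Submodule.dense_iff_topologicalClosure_eq_top.mp hedense).symm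
  set hb : HilbertBasis ℕ ℝ H := HilbertBasis.mk he hsp with hbdef
  have hbe : ⇑hb = e := HilbertBasis.coe_mk he hsp
  set D : ℕ → ℝ := fun k => ⟪φ k, e k⟫ with hDdef
  -- diagonal entries dominate lam, and are bounded by Bφ
  have hD2 : ∀ k, lam ^ 2 ≤ D k ^ 2 := by
    intro k
    have h := hdiag k
    have : lam ^ 2 ≤ |D k| ^ 2 := by
      have := abs_nonneg (D k)
      nlinarith
    simpa [sq_abs] using this
  have hφnorm : ∀ i, ‖φ i‖ ^ 2 ≤ Bφ := by
    intro i
    have h := (hφb (Finsupp.single i (1 : ℝ))).2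
    have hs : (Finsupp.single i (1 : ℝ)).support = {i} :=
      Finsupp.support_single_ne_zero i one_ne_zero
    rw [hs] at h
    simpa using h
  have hDB : ∀ i, D i ^ 2 ≤ Bφ := by
    intro i
    have h1 : |D i| ≤ ‖φ i‖ * ‖e i‖ := abs_real_inner_le_norm _ _
    rw [he.1 i, mul_one] at h1
    have h2 : D i ^ 2 ≤ ‖φ i‖ ^ 2 := by
      have := abs_nonneg (D i)
      nlinarith [sq_abs (D i)]
    exact h2.trans (hφnorm i)
  have hBφ0 : (0:ℝ) < Bφ := lt_of_lt_of_le hAφ hABφ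
  -- Parseval for the Hilbert basis
  have hrepr : ∀ x : H, ∀ k, hb.repr x k = ⟪x, e k⟫ := by
    intro x k
    rw [hb.repr_apply_apply, hbe, real_inner_comm]
  have hPars : ∀ x : H, ‖x‖ ^ 2 = ∑' k, ⟪x, e k⟫ ^ 2 := by
    intro x
    rw [← hb.repr.norm_map x, l2_norm_sq]
    exact tsum_congr fun k => by rw [hrepr x k]
  constructor
  · -- Part 1 : lower Riesz bound for each weaving
    intro σ c
    set b : ℕ → ℝ := fun i => if i ∈ σ then 0 else c i with hbfun
    set f : H := ∑ i ∈ c.support, c i • (if i ∈ σ then e i else φ i) with hf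
    set β : lp (fun _ : ℕ => ℝ) 2 := ∑ i ∈ c.support, b i • lp.single 2 i (1:ℝ) with hβdef
    have hβk : ∀ k, β k = b k := by
      intro k
      rw [hβdef, lp.coeFn_sum, Finset.sum_apply]
      by_cases hk : k ∈ c.support
      · rw [Finset.sum_eq_single_of_mem k hk (fun i _ hik => by
          simp [lp.coeFn_smul, lp.single_apply_ne 2 i _ (Ne.symm hik), Pi.single_apply, Ne.symm hik])]
        simp [lp.coeFn_smul, lp.single_apply_self]
      · have hck : c k = 0 := Finsupp.notMem_support_iff.mp hk
        rw [Finset.sum_eq_zero (fun i hi => by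
          have hki : k ≠ i := fun h => hk (h ▸ hi)
          simp [lp.coeFn_smul, lp.single_apply_ne 2 i _ hki, Pi.single_apply, hki])]
        simp [hbfun, hck]
    set s2 : ℝ := ∑ i ∈ c.support, (if i ∈ σ then c i else 0) ^ 2 with hs2
    set t2 : ℝ := ∑ i ∈ c.support, b i ^ 2 with ht2
    have hs2nn : 0 ≤ s2 := Finset.sum_nonneg fun i _ => sq_nonneg _
    have ht2nn : 0 ≤ t2 := Finset.sum_nonneg fun i _ => sq_nonneg _
    have hsplit : s2 + t2 = ∑ i ∈ c.support, c i ^ 2 := by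
      rw [hs2, ht2, ← Finset.sum_add_distrib]
      refine Finset.sum_congr rfl fun i _ => ?_
      by_cases hiσ : i ∈ σ <;> simp [hbfun, hiσ]
    have hβnorm : ‖β‖ ^ 2 = t2 := by
      rw [l2_norm_sq, tsum_eq_sum (s := c.support)
        (fun k hk => by
          have hck : c k = 0 := Finsupp.notMem_support_iff.mp hk
          simp [hβk, hbfun, hck])]
      exact Finset.sum_congr rfl fun i _ => by rw [hβk]
    -- the coefficient formula
    set γ : ℕ → ℝ := fun k => if k ∈ σ then c k else c k * D k with hγdef
    have hRβ : ∀ k, R β k = ∑ ℓ ∈ c.support, (if k = ℓ then 0 else ⟪φ ℓ, e k⟫) * b ℓ := by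
      intro k
      rw [hR]
      rw [tsum_eq_sum (s := c.support) (fun ℓ hℓ => by
        have hcℓ : c ℓ = 0 := Finsupp.notMem_support_iff.mp hℓ
        rw [hβk]
        simp [hbfun, hcℓ])]
      exact Finset.sum_congr rfl fun ℓ _ => by rw [hβk]
    have hkey : ∀ k, ⟪f, e k⟫ = γ k + R β k := by
      intro k
      rw [hf, sum_inner, hRβ]
      have hγk : γ k = ∑ i ∈ c.support, (if i = k then γ k else 0) := by
        rw [Finset.sum_ite_eq' c.support k (fun _ => γ k)]
        by_cases hk : k ∈ c.support
        · simp [hk]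
        · have hck : c k = 0 := Finsupp.notMem_support_iff.mp hk
          simp [hk, hγdef, hck]
      rw [hγk, ← Finset.sum_add_distrib]
      refine Finset.sum_congr rfl fun i _ => ?_
      rw [real_inner_smul_left]
      by_cases hiσ : i ∈ σ
      · rw [if_pos hiσ]
        have horth : ⟪e i, e k⟫ = if i = k then (1:ℝ) else 0 := orthonormal_iff_ite.mp he i k
        rw [horth]
        have hbi : b i = 0 := by simp [hbfun, hiσ]
        rw [hbi, mul_zero, add_zero]
        by_cases hik : i = k
        · subst hik; simp [hγdef, hiσ]
        · simp [hik]
      · rw [if_neg hiσ]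
        have hbi : b i = c i := by simp [hbfun, hiσ]
        rw [hbi]
        by_cases hik : i = k
        · subst hik
          simp [hγdef, hiσ, hDdef, mul_comm]
        · have : ¬ (k = i) := fun h => hik h.symm
          simp [hik, this, hγdef, mul_comm]
    -- summability facts
    have hsumf : Summable (fun k => (⟪f, e k⟫ : ℝ) ^ 2) := by
      have := l2_summable_sq (hb.repr f)
      exact this.congr fun k => by rw [hrepr f k]
    have hsumR : Summable (fun k => (R β k) ^ 2) := l2_summable_sq (R β)
    have hγzero : ∀ k ∉ c.support, γ k ^ 2 / 2 = 0 := by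
      intro k hk
      have hck : c k = 0 := Finsupp.notMem_support_iff.mp hk
      simp [hγdef, hck]
    have hsumγ : Summable (fun k => γ k ^ 2 / 2) :=
      summable_of_ne_finset_zero (s := c.support) hγzero
    -- main tsum inequality
    have hmain : ∑' k, γ k ^ 2 / 2 ≤ (∑' k, (⟪f, e k⟫ : ℝ) ^ 2) + ∑' k, (R β k) ^ 2 := by
      rw [← Summable.tsum_add hsumf hsumR]
      refine Summable.tsum_le_tsum (fun k => ?_) hsumγ (hsumf.add hsumR)
      rw [hkey k]
      nlinarith [sq_nonneg (γ k + 2 * R β k)]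
    have hγsum : ∑' k, γ k ^ 2 / 2 = (∑ i ∈ c.support, γ i ^ 2) / 2 := by
      rw [tsum_eq_sum (s := c.support) hγzero, Finset.sum_div]
    have hγlow : s2 + lam ^ 2 * t2 ≤ ∑ i ∈ c.support, γ i ^ 2 := by
      have : s2 + lam ^ 2 * t2 = ∑ i ∈ c.support, ((if i ∈ σ then c i else 0) ^ 2 + lam ^ 2 * b i ^ 2) := by
        rw [Finset.sum_add_distrib, ← Finset.mul_sum, hs2, ht2]
      rw [this]
      refine Finset.sum_le_sum fun i _ => ?_
      by_cases hiσ : i ∈ σ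
      · simp [hγdef, hbfun, hiσ]
      · have h1 : lam ^ 2 * c i ^ 2 ≤ D i ^ 2 * c i ^ 2 :=
          mul_le_mul_of_nonneg_right (hD2 i) (sq_nonneg _)
        simp only [hγdef, hbfun, if_neg hiσ]
        nlinarith
    have hRβnorm : ∑' k, (R β k) ^ 2 ≤ lam ^ 2 / 4 * t2 := by
      have h1 : ‖R β‖ ≤ lam / 2 * ‖β‖ := by
        calc ‖R β‖ ≤ ‖R‖ * ‖β‖ := R.le_opNorm β
        _ ≤ lam / 2 * ‖β‖ := by
            exact mul_le_mul_of_nonneg_right hRnorm (norm_nonneg _)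
      have h2 : ‖R β‖ ^ 2 ≤ (lam / 2) ^ 2 * ‖β‖ ^ 2 := by
        nlinarith [norm_nonneg (R β), norm_nonneg β, mul_nonneg (le_of_lt (half_pos hlam)) (norm_nonneg β)]
      rw [← l2_norm_sq]
      rw [hβnorm] at h2
      nlinarith
    have hX : ‖f‖ ^ 2 = ∑' k, (⟪f, e k⟫ : ℝ) ^ 2 := hPars f
    rw [← hsplit]
    have hfin : s2 / 2 + lam ^ 2 * t2 / 4 ≤ ‖f‖ ^ 2 := by
      rw [hX]
      rw [hγsum] at hmain
      linarith [hγlow, hRβnorm, hmain]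
    rcases le_total (1:ℝ) (lam ^ 2) with hm | hm
    · rw [min_eq_left hm]
      nlinarith
    · rw [min_eq_right hm]
      nlinarith
  · -- Part 2 : frame bounds
    refine ⟨min (1/2) (lam ^ 2 / 4), 2 * Bφ + 1 + lam ^ 2 / 2, ?_, ?_, ?_⟩
    · exact lt_min (by norm_num) (by positivity)
    · have h1 : min (1/2 : ℝ) (lam ^ 2 / 4) ≤ 1/2 := min_le_left _ _
      nlinarith
    intro σ x
    set u : lp (fun _ : ℕ => ℝ) 2 := hb.repr x with hudef
    have hu : ∀ k, u k = ⟪x, e k⟫ := fun k => hrepr x k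
    set r : lp (fun _ : ℕ => ℝ) 2 := (ContinuousLinearMap.adjoint R) u with hrdef
    have hr : ∀ i, r i = ∑' k, u k * (if k = i then 0 else ⟪φ i, e k⟫) := by
      intro i
      have h1 : r i = ⟪r, lp.single 2 i (1:ℝ)⟫ := by
        rw [lp.inner_single_right]
        simp [RCLike.inner_apply]
      rw [h1, hrdef, ContinuousLinearMap.adjoint_inner_left, lp.inner_eq_tsum]
      refine tsum_congr fun k => ?_
      have h2 : R (lp.single 2 i (1:ℝ)) k = (if k = i then 0 else ⟪φ i, e k⟫) := by
        rw [hR]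
        rw [tsum_eq_single i (fun ℓ hℓ => by
          rw [lp.single_apply_ne 2 i _ hℓ, mul_zero])]
        rw [lp.single_apply_self, mul_one]
      rw [h2]
      simp [RCLike.inner_apply, mul_comm]
    have hv : ∀ i, ⟪x, φ i⟫ = D i * u i + r i := by
      intro i
      have hfull : ∑' k, ⟪x, e k⟫ * ⟪e k, φ i⟫ = ⟪x, φ i⟫ := by
        have h := hb.tsum_inner_mul_inner x (φ i)
        rw [hbe] at h
        exact h
      have hsfull : Summable fun k => (⟪x, e k⟫ : ℝ) * ⟪e k, φ i⟫ := by
        have h := hb.summable_inner_mul_inner x (φ i)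
        rw [hbe] at h
        exact h
      have hsind : Summable (fun k => if k = i then D i * u i else (0:ℝ)) :=
        (hasSum_ite_eq i (D i * u i)).summable
      have hptw : ∀ k, u k * (if k = i then 0 else ⟪φ i, e k⟫)
          = ⟪x, e k⟫ * ⟪e k, φ i⟫ - (if k = i then D i * u i else 0) := by
        intro k
        by_cases hk : k = i
        · subst hk
          rw [if_pos rfl, if_pos rfl, mul_zero, hu]
          simp only [hDdef]
          rw [real_inner_comm (φ k) (e k)]
          ring
        · rw [if_neg hk, if_neg hk, hu, real_inner_comm (φ i) (e k), sub_zero]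
      have := hr i
      rw [tsum_congr hptw, Summable.tsum_sub hsfull hsind, hfull, tsum_ite_eq] at this
      linarith
    -- termwise description of the frame sum
    have hg : ∀ i, (⟪x, if i ∈ σ then e i else φ i⟫ : ℝ)
        = if i ∈ σ then u i else D i * u i + r i := by
      intro i
      by_cases hiσ : i ∈ σ
      · rw [if_pos hiσ, if_pos hiσ, hu]
      · rw [if_neg hiσ, if_neg hiσ, hv]
    have hsu : Summable fun i => u i ^ 2 := l2_summable_sq u
    have hsr : Summable fun i => r i ^ 2 := l2_summable_sq r
    have hbound : ∀ i, (⟪x, if i ∈ σ then e i else φ i⟫ : ℝ) ^ 2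
        ≤ (2 * Bφ + 1) * u i ^ 2 + 2 * r i ^ 2 := by
      intro i
      rw [hg]
      by_cases hiσ : i ∈ σ
      · rw [if_pos hiσ]
        nlinarith [sq_nonneg (u i), sq_nonneg (r i)]
      · rw [if_neg hiσ]
        have := hDB i
        nlinarith [sq_nonneg (D i * u i - r i), sq_nonneg (u i), sq_nonneg (r i)]
    have hsbound : Summable fun i => (2 * Bφ + 1) * u i ^ 2 + 2 * r i ^ 2 :=
      (hsu.mul_left _).add (hsr.mul_left _)
    have hS : Summable fun i => (⟪x, if i ∈ σ then e i else φ i⟫ : ℝ) ^ 2 :=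
      Summable.of_nonneg_of_le (fun i => sq_nonneg _) hbound hsbound
    have hunorm : ‖u‖ = ‖x‖ := hb.repr.norm_map x
    have husum : ∑' i, u i ^ 2 = ‖x‖ ^ 2 := by rw [← l2_norm_sq, hunorm]
    have hrnorm : ∑' i, r i ^ 2 ≤ lam ^ 2 / 4 * ‖x‖ ^ 2 := by
      have h1 : ‖r‖ ≤ lam / 2 * ‖x‖ := by
        calc ‖r‖ ≤ ‖ContinuousLinearMap.adjoint R‖ * ‖u‖ :=
              (ContinuousLinearMap.adjoint R).le_opNorm u
        _ = ‖R‖ * ‖x‖ := by rw [ContinuousLinearMap.adjoint.norm_map, hunorm]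
        _ ≤ lam / 2 * ‖x‖ := mul_le_mul_of_nonneg_right hRnorm (norm_nonneg _)
      rw [← l2_norm_sq]
      nlinarith [norm_nonneg r, norm_nonneg x, mul_nonneg (le_of_lt (half_pos hlam)) (norm_nonneg x)]
    -- split ‖x‖² into σ and σᶜ parts
    have hss2 : Summable fun i => (if i ∈ σ then u i ^ 2 else 0) :=
      Summable.of_nonneg_of_le (fun i => by positivity)
        (fun i => by by_cases hiσ : i ∈ σ <;> simp [hiσ, sq_nonneg]) hsu
    have hst2 : Summable fun i => (if i ∈ σ then 0 else u i ^ 2) :=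
      Summable.of_nonneg_of_le (fun i => by positivity)
        (fun i => by by_cases hiσ : i ∈ σ <;> simp [hiσ, sq_nonneg]) hsu
    set s2 : ℝ := ∑' i, (if i ∈ σ then u i ^ 2 else 0) with hs2def
    set t2 : ℝ := ∑' i, (if i ∈ σ then 0 else u i ^ 2) with ht2def
    have hs2nn : 0 ≤ s2 := tsum_nonneg fun i => by positivity
    have ht2nn : 0 ≤ t2 := tsum_nonneg fun i => by positivity
    have hst : s2 + t2 = ‖x‖ ^ 2 := by
      rw [hs2def, ht2def, ← Summable.tsum_add hss2 hst2, ← husum]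
      exact tsum_congr fun i => by by_cases hiσ : i ∈ σ <;> simp [hiσ]
    set S : ℝ := ∑' i, (⟪x, if i ∈ σ then e i else φ i⟫ : ℝ) ^ 2 with hSdef
    constructor
    · -- lower frame bound
      have hI1 : s2 ≤ S := by
        refine Summable.tsum_le_tsum (fun i => ?_) hss2 hS
        rw [hg]
        by_cases hiσ : i ∈ σ <;> simp [hiσ, sq_nonneg]
      have hI2 : s2 + lam ^ 2 / 2 * t2 ≤ S + ∑' i, r i ^ 2 := by
        have hlhs : Summable fun i => (if i ∈ σ then u i ^ 2 else lam ^ 2 / 2 * u i ^ 2) := by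
          refine Summable.of_nonneg_of_le (fun i => by positivity)
            (fun i => ?_) (hsu.mul_left (1 + lam ^ 2 / 2))
          by_cases hiσ : i ∈ σ <;> simp [hiσ] <;> nlinarith [sq_nonneg (u i), sq_nonneg lam]
        have heq : s2 + lam ^ 2 / 2 * t2
            = ∑' i, (if i ∈ σ then u i ^ 2 else lam ^ 2 / 2 * u i ^ 2) := by
          rw [hs2def, ht2def, ← tsum_mul_left, ← Summable.tsum_add hss2 (hst2.mul_left _)]
          exact tsum_congr fun i => by by_cases hiσ : i ∈ σ <;> simp [hiσ]
        rw [heq, ← Summable.tsum_add hS hsr]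
        refine Summable.tsum_le_tsum (fun i => ?_) hlhs (hS.add hsr)
        rw [hg]
        by_cases hiσ : i ∈ σ
        · simp only [if_pos hiσ]
          nlinarith [sq_nonneg (r i)]
        · simp only [if_neg hiσ]
          have h1 := hD2 i
          nlinarith [sq_nonneg (D i * u i + 2 * r i), sq_nonneg (u i),
            mul_nonneg (sub_nonneg.mpr (hD2 i)) (sq_nonneg (u i))]
      have hK : ∑' i, r i ^ 2 ≤ lam ^ 2 / 4 * (s2 + t2) := by rw [hst]; exact hrnorm
      rw [← hst]
      rcases le_total (lam ^ 2) 2 with hm | hm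
      · have : min (1/2 : ℝ) (lam ^ 2 / 4) = lam ^ 2 / 4 := min_eq_right (by linarith)
        rw [this]
        nlinarith
      · have : min (1/2 : ℝ) (lam ^ 2 / 4) = 1/2 := min_eq_left (by linarith)
        rw [this]
        nlinarith [mul_nonneg (by linarith : (0:ℝ) ≤ lam ^ 2 - 2) (by linarith : (0:ℝ) ≤ S - s2)]
    · -- upper frame bound
      have h1 : S ≤ ∑' i, ((2 * Bφ + 1) * u i ^ 2 + 2 * r i ^ 2) :=
        Summable.tsum_le_tsum hbound hS hsbound
      have h2 : ∑' i, ((2 * Bφ + 1) * u i ^ 2 + 2 * r i ^ 2)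
          = (2 * Bφ + 1) * ‖x‖ ^ 2 + 2 * ∑' i, r i ^ 2 := by
        rw [Summable.tsum_add (hsu.mul_left _) (hsr.mul_left _), tsum_mul_left, tsum_mul_left, husum]
      have h3 : (2 * Bφ + 1 + lam ^ 2 / 2) * ‖x‖ ^ 2
          = (2 * Bφ + 1) * ‖x‖ ^ 2 + 2 * (lam ^ 2 / 4 * ‖x‖ ^ 2) := by ring
      rw [h3]
      linarith [hrnorm, h1, h2]
end
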